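/- arXiv:1810.05549 — 4 statements merged into one kernel-verified Lean document; each statement's English description precedes it below -/
import Mathlib

section
/- Let h : U × E₁ → F₁ be smooth with U ⊆ E₀ open and each h_x := h(x,·) : E₁ → F₁ linear and invertible. If g : U × F₁ → E₁, (x,v) ↦ h_x⁻¹(v), is continuous, then g is smooth, and its partial derivative in the first variable satisfies d₁g(x,v)(u) = -g(x, d₁h(x, g(x,v))(u)) for x ∈ U, v ∈ F₁, u ∈ E₀. -/
open Filter Topology

structure TVS : Type 1 where
  carrier : Type
  grp : AddCommGroup carrier
  mod : Module ℝ carrier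
  top : TopologicalSpace carrier

attribute [instance] TVS.grp TVS.mod TVS.top

def TVS.ofType (X : Type) [g : AddCommGroup X] [m : Module ℝ X] [t : TopologicalSpace X] :
    TVS := ⟨X, g, m, t⟩

noncomputable def TVS.ext1 (E : TVS) : TVS := TVS.ofType (E.carrier × E.carrier × ℝ)

/-- Michal–Bastiani `C^k` on `U`. -/
def IsCOn (F : Type) [AddCommGroup F] [Module ℝ F] [TopologicalSpace F] :
    (k : ℕ) → (E : TVS) → (E.carrier → F) → Set E.carrier → Prop
  | 0, _E, f, U => ContinuousOn f U
  | k+1, E, f, U =>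
      ∃ f1 : E.ext1.carrier → F,
        (∀ x v t, x ∈ U → x + t • v ∈ U → f (x + t • v) - f x = t • f1 (x, v, t)) ∧
        IsCOn F k E.ext1 f1 {p : E.carrier × E.carrier × ℝ | p.1 ∈ U ∧ p.1 + p.2.2 • p.2.1 ∈ U}

/-- Michal–Bastiani smoothness (`C^∞`) on `U`. -/
def IsSmoothOn (F : Type) [AddCommGroup F] [Module ℝ F] [TopologicalSpace F]
    (E : TVS) (f : E.carrier → F) (U : Set E.carrier) : Prop :=
  ∀ k, IsCOn F k E f U

/-- `y = df(x)(v)`, the directional derivative computed within `U`. -/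
def IsDirDerivOn {X Y : Type} [AddCommGroup X] [Module ℝ X] [TopologicalSpace X]
    [AddCommGroup Y] [Module ℝ Y] [TopologicalSpace Y]
    (U : Set X) (f : X → Y) (x v : X) (y : Y) : Prop :=
  Filter.Tendsto (fun t : ℝ => t⁻¹ • (f (x + t • v) - f x))
    (nhdsWithin (0 : ℝ) {t : ℝ | t ≠ 0 ∧ x + t • v ∈ U}) (nhds y)

/-! ### Auxiliary library for Michal–Bastiani calculus -/

/-- The "extended" set appearing in the recursion of `IsCOn`. -/
def SQ {X : Type} [AddCommGroup X] [Module ℝ X] (U : Set X) : Set (X × X × ℝ) :=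
  {p | p.1 ∈ U ∧ p.1 + p.2.2 • p.2.1 ∈ U}

theorem isCOn_succ {X F : Type} [AddCommGroup X] [Module ℝ X] [TopologicalSpace X]
    [AddCommGroup F] [Module ℝ F] [TopologicalSpace F] (k : ℕ) (f : X → F) (U : Set X) :
    IsCOn F (k+1) (TVS.ofType X) f U ↔
      ∃ f1 : X × X × ℝ → F,
        (∀ x v t, x ∈ U → x + t • v ∈ U → f (x + t • v) - f x = t • f1 (x, v, t)) ∧
        IsCOn F k (TVS.ofType (X × X × ℝ)) f1 (SQ U) := Iff.rfl

theorem isCOn_mono {F : Type} [AddCommGroup F] [Module ℝ F] [TopologicalSpace F] :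
    ∀ (k : ℕ) (E : TVS) (f : E.carrier → F) (U V : Set E.carrier), V ⊆ U →
      IsCOn F k E f U → IsCOn F k E f V := by
  intro k
  induction k with
  | zero => intro E f U V hVU hf; exact hf.mono hVU
  | succ k ih =>
    rintro E f U V hVU ⟨f1, hid, hf1⟩
    refine ⟨f1, fun x v t hx hxt => hid x v t (hVU hx) (hVU hxt),
      ih E.ext1 f1 _ _ ?_ hf1⟩
    exact fun p hp => ⟨hVU hp.1, hVU hp.2⟩

theorem isCOn_continuousOn : ∀ (k : ℕ) {X F : Type} [AddCommGroup X] [Module ℝ X]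
    [TopologicalSpace X] [IsTopologicalAddGroup X]
    [AddCommGroup F] [Module ℝ F] [TopologicalSpace F] [IsTopologicalAddGroup F]
    (f : X → F) (U : Set X), IsCOn F k (TVS.ofType X) f U → ContinuousOn f U := by
  intro k
  induction k with
  | zero => intro X F _ _ _ _ _ _ _ _ f U hf; exact hf
  | succ k ih =>
    intro X F _ _ _ _ _ _ _ _ f U hf
    rw [isCOn_succ] at hf
    obtain ⟨f1, hid, hf1⟩ := hf
    have hc1 : ContinuousOn f1 (SQ U) := ih f1 (SQ U) hf1
    intro x hx
    have key : ∀ y ∈ U, f y = f x + f1 (x, y - x, 1) := by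
      intro y hy
      have h2 := hid x (y - x) 1 hx (by simpa using hy)
      simp only [one_smul] at h2
      rw [show x + (y - x) = y by abel] at h2
      rw [← h2]; abel
    have h0 : f1 (x, 0, 1) = 0 := by
      have h2 := hid x 0 1 hx (by simpa using hx)
      simpa using h2.symm
    have hmem : ((x, 0, 1) : X × X × ℝ) ∈ SQ U := ⟨hx, by simpa using hx⟩
    have tend : ContinuousWithinAt (fun y => f x + f1 (x, y - x, 1)) U x := by
      have hcont : ContinuousWithinAt f1 (SQ U) (x, 0, 1) := hc1 _ hmem
      have hmap : Filter.Tendsto (fun y => ((x, y - x, 1) : X × X × ℝ)) (nhdsWithin x U)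
          (nhdsWithin (x, 0, 1) (SQ U)) := by
        rw [tendsto_nhdsWithin_iff]
        constructor
        · have hc : Continuous (fun y : X => ((x, y - x, 1) : X × X × ℝ)) :=
            continuous_const.prodMk
              (((continuous_id.sub continuous_const)).prodMk continuous_const)
          have := (hc.tendsto x).mono_left (nhdsWithin_le_nhds (s := U))
          simpa using this
        · exact eventually_mem_nhdsWithin.mono fun y hy =>
            show ((x, y - x, 1) : X × X × ℝ) ∈ SQ U from ⟨hx, by simpa using hy⟩
      have := Filter.Tendsto.add (tendsto_const_nhds (x := f x)) (hcont.tendsto.comp hmap)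
      unfold ContinuousWithinAt
      simpa [h0] using this
    exact tend.congr key (by simp [h0])

theorem isCOn_down : ∀ (k : ℕ) {X F : Type} [AddCommGroup X] [Module ℝ X]
    [TopologicalSpace X] [IsTopologicalAddGroup X]
    [AddCommGroup F] [Module ℝ F] [TopologicalSpace F] [IsTopologicalAddGroup F]
    (f : X → F) (U : Set X),
    IsCOn F (k+1) (TVS.ofType X) f U → IsCOn F k (TVS.ofType X) f U := by
  intro k
  induction k with
  | zero => intro X F _ _ _ _ _ _ _ _ f U hf; exact isCOn_continuousOn 1 f U hf
  | succ k ih =>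
    intro X F _ _ _ _ _ _ _ _ f U hf
    rw [isCOn_succ] at hf ⊢
    obtain ⟨f1, hid, hf1⟩ := hf
    exact ⟨f1, hid, ih f1 _ hf1⟩

theorem isCOn_preLin : ∀ (k : ℕ) {X Y F : Type}
    [AddCommGroup X] [Module ℝ X] [TopologicalSpace X]
    [AddCommGroup Y] [Module ℝ Y] [TopologicalSpace Y]
    [AddCommGroup F] [Module ℝ F] [TopologicalSpace F]
    (f : Y → F) (V : Set Y) (L : X → Y), IsLinearMap ℝ L → Continuous L →
    IsCOn F k (TVS.ofType Y) f V → IsCOn F k (TVS.ofType X) (fun x => f (L x)) (L ⁻¹' V) := by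
  intro k
  induction k with
  | zero =>
    intro X Y F _ _ _ _ _ _ _ _ _ f V L hL hLc hf
    exact hf.comp hLc.continuousOn (fun x hx => hx)
  | succ k ih =>
    intro X Y F _ _ _ _ _ _ _ _ _ f V L hL hLc hf
    rw [isCOn_succ] at hf; refine (isCOn_succ k _ _).2 ?_
    obtain ⟨f1, hid, hf1⟩ := hf
    have e : ∀ (x v : X) (t : ℝ), L (x + t • v) = L x + t • L v := by
      intro x v t; rw [hL.map_add, hL.map_smul]
    refine ⟨fun p => f1 (L p.1, L p.2.1, p.2.2), ?_, ?_⟩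
    · intro x v t hx hxt
      replace hx : L x ∈ V := hx; replace hxt : L (x + t • v) ∈ V := hxt; rw [e x v t] at hxt
      show f (L (x + t • v)) - f (L x) = t • f1 (L x, L v, t)
      rw [e x v t]
      exact hid (L x) (L v) t hx hxt
    · have lin' : IsLinearMap ℝ (fun p : X × X × ℝ => ((L p.1, L p.2.1, p.2.2) : Y × Y × ℝ)) := by
        constructor
        · intro a b; simp [Prod.ext_iff, hL.map_add]
        · intro c a; simp [Prod.ext_iff, hL.map_smul]
      have cont' : Continuous (fun p : X × X × ℝ => ((L p.1, L p.2.1, p.2.2) : Y × Y × ℝ)) :=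
        (hLc.comp continuous_fst).prodMk
          ((hLc.comp (continuous_fst.comp continuous_snd)).prodMk
            (continuous_snd.comp continuous_snd))
      have h2 := ih f1 (SQ V) _ lin' cont' hf1
      refine isCOn_mono k (TVS.ofType (X × X × ℝ)) _ _ _ ?_ h2
      rintro ⟨x, v, t⟩ ⟨h1m, h2m⟩
      exact ⟨h1m, by have h2m' : L (x + t • v) ∈ V := h2m; rwa [e] at h2m'⟩

theorem isCOn_postLin : ∀ (k : ℕ) {X F G : Type}
    [AddCommGroup X] [Module ℝ X] [TopologicalSpace X]
    [AddCommGroup F] [Module ℝ F] [TopologicalSpace F]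
    [AddCommGroup G] [Module ℝ G] [TopologicalSpace G]
    (f : X → F) (U : Set X) (L : F → G), IsLinearMap ℝ L → Continuous L →
    IsCOn F k (TVS.ofType X) f U → IsCOn G k (TVS.ofType X) (fun x => L (f x)) U := by
  intro k
  induction k with
  | zero =>
    intro X F G _ _ _ _ _ _ _ _ _ f U L hL hLc hf
    exact hLc.comp_continuousOn hf
  | succ k ih =>
    intro X F G _ _ _ _ _ _ _ _ _ f U L hL hLc hf
    rw [isCOn_succ] at hf; refine (isCOn_succ k _ _).2 ?_
    obtain ⟨f1, hid, hf1⟩ := hf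
    refine ⟨fun p => L (f1 p), ?_, ih f1 _ L hL hLc hf1⟩
    intro x v t hx hxt
    rw [← hL.map_sub, hid x v t hx hxt, hL.map_smul]

theorem isCOn_pair : ∀ (k : ℕ) {X F G : Type}
    [AddCommGroup X] [Module ℝ X] [TopologicalSpace X]
    [AddCommGroup F] [Module ℝ F] [TopologicalSpace F]
    [AddCommGroup G] [Module ℝ G] [TopologicalSpace G]
    (f : X → F) (g : X → G) (U : Set X),
    IsCOn F k (TVS.ofType X) f U → IsCOn G k (TVS.ofType X) g U →
    IsCOn (F × G) k (TVS.ofType X) (fun x => (f x, g x)) U := by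
  intro k
  induction k with
  | zero =>
    intro X F G _ _ _ _ _ _ _ _ _ f g U hf hg
    exact ContinuousOn.prodMk hf hg
  | succ k ih =>
    intro X F G _ _ _ _ _ _ _ _ _ f g U hf hg
    rw [isCOn_succ] at hf hg; refine (isCOn_succ k _ _).2 ?_
    obtain ⟨f1, hidf, hf1⟩ := hf
    obtain ⟨g1, hidg, hg1⟩ := hg
    refine ⟨fun p => (f1 p, g1 p), ?_, ih f1 g1 _ hf1 hg1⟩
    intro x v t hx hxt
    simp [Prod.ext_iff, hidf x v t hx hxt, hidg x v t hx hxt]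

theorem isCOn_lin : ∀ (k : ℕ) {X F : Type}
    [AddCommGroup X] [Module ℝ X] [TopologicalSpace X]
    [AddCommGroup F] [Module ℝ F] [TopologicalSpace F]
    (L : X → F), IsLinearMap ℝ L → Continuous L →
    ∀ (U : Set X), IsCOn F k (TVS.ofType X) L U := by
  intro k
  induction k with
  | zero => intro X F _ _ _ _ _ _ L hL hLc U; exact hLc.continuousOn
  | succ k ih =>
    intro X F _ _ _ _ _ _ L hL hLc U
    rw [isCOn_succ]
    refine ⟨fun p => L p.2.1, ?_, ?_⟩
    · intro x v t _ _
      rw [hL.map_add, hL.map_smul]; abel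
    · refine ih (fun p : X × X × ℝ => L p.2.1) ?_ ?_ _
      · constructor
        · intro a b; simp [hL.map_add]
        · intro c a; simp [hL.map_smul]
      · exact hLc.comp (continuous_fst.comp continuous_snd)

theorem isCOn_add {k : ℕ} {X F : Type}
    [AddCommGroup X] [Module ℝ X] [TopologicalSpace X]
    [AddCommGroup F] [Module ℝ F] [TopologicalSpace F] [IsTopologicalAddGroup F]
    {f g : X → F} {U : Set X}
    (hf : IsCOn F k (TVS.ofType X) f U) (hg : IsCOn F k (TVS.ofType X) g U) :
    IsCOn F k (TVS.ofType X) (fun x => f x + g x) U := by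
  have := isCOn_postLin k (fun x => (f x, g x)) U (fun p : F × F => p.1 + p.2)
    ⟨fun a b => by simp; abel, fun c a => by simp [smul_add]⟩
    (continuous_fst.add continuous_snd) (isCOn_pair k f g U hf hg)
  simpa using this

theorem isCOn_sub {k : ℕ} {X F : Type}
    [AddCommGroup X] [Module ℝ X] [TopologicalSpace X]
    [AddCommGroup F] [Module ℝ F] [TopologicalSpace F] [IsTopologicalAddGroup F]
    {f g : X → F} {U : Set X}
    (hf : IsCOn F k (TVS.ofType X) f U) (hg : IsCOn F k (TVS.ofType X) g U) :
    IsCOn F k (TVS.ofType X) (fun x => f x - g x) U := by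
  have := isCOn_postLin k (fun x => (f x, g x)) U (fun p : F × F => p.1 - p.2)
    ⟨fun a b => by simp; abel, fun c a => by simp [smul_sub]⟩
    (continuous_fst.sub continuous_snd) (isCOn_pair k f g U hf hg)
  simpa using this

theorem isCOn_comp : ∀ (k : ℕ) {X Y F : Type}
    [AddCommGroup X] [Module ℝ X] [TopologicalSpace X] [IsTopologicalAddGroup X]
    [AddCommGroup Y] [Module ℝ Y] [TopologicalSpace Y] [IsTopologicalAddGroup Y]
    [AddCommGroup F] [Module ℝ F] [TopologicalSpace F]
    (f : Y → F) (V : Set Y) (ψ : X → Y) (U : Set X),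
    IsCOn F k (TVS.ofType Y) f V → IsCOn Y k (TVS.ofType X) ψ U → Set.MapsTo ψ U V →
    IsCOn F k (TVS.ofType X) (fun x => f (ψ x)) U := by
  intro k
  induction k with
  | zero =>
    intro X Y F _ _ _ _ _ _ _ _ _ _ _ f V ψ U hf hψ him
    exact hf.comp hψ him
  | succ k ih =>
    intro X Y F _ _ _ _ _ _ _ _ _ _ _ f V ψ U hf hψ him
    have hψk : IsCOn Y k (TVS.ofType X) ψ U := isCOn_down k ψ U hψ
    rw [isCOn_succ] at hf hψ; refine (isCOn_succ k _ _).2 ?_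
    obtain ⟨f1, hfid, hf1⟩ := hf
    obtain ⟨ψ1, hψid, hψ1⟩ := hψ
    have e : ∀ x v t, x ∈ U → x + t • v ∈ U → ψ (x + t • v) = ψ x + t • ψ1 (x, v, t) := by
      intro x v t hx hxt
      rw [← hψid x v t hx hxt]; abel
    refine ⟨fun p => f1 (ψ p.1, ψ1 p, p.2.2), ?_, ?_⟩
    · intro x v t hx hxt
      rw [e x v t hx hxt]
      exact hfid (ψ x) (ψ1 (x, v, t)) t (him hx) ((e x v t hx hxt) ▸ him hxt)
    · have c1 : IsCOn Y k (TVS.ofType (X × X × ℝ)) (fun p => ψ p.1) (SQ U) := by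
        refine isCOn_mono k (TVS.ofType (X × X × ℝ)) _ _ _ (fun p hp => hp.1)
          (isCOn_preLin k ψ U Prod.fst ⟨fun a b => rfl, fun c a => rfl⟩ continuous_fst hψk)
      have c2 : IsCOn ℝ k (TVS.ofType (X × X × ℝ)) (fun p => p.2.2) (SQ U) :=
        isCOn_lin k _ ⟨fun a b => rfl, fun c a => rfl⟩ (continuous_snd.comp continuous_snd) _
      have cΦ : IsCOn (Y × Y × ℝ) k (TVS.ofType (X × X × ℝ))
          (fun p => ((ψ p.1, ψ1 p, p.2.2) : Y × Y × ℝ)) (SQ U) :=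
        isCOn_pair k _ _ _ c1 (isCOn_pair k _ _ _ hψ1 c2)
      refine ih f1 (SQ V) _ (SQ U) hf1 cΦ ?_
      rintro ⟨x, v, t⟩ ⟨h1m, h2m⟩
      exact ⟨him h1m, by rw [show ψ x + t • ψ1 (x, v, t) = ψ (x + t • v) from (e x v t h1m h2m).symm]; exact him h2m⟩

theorem isCOn_smul_univ : ∀ (k : ℕ) {X : Type}
    [AddCommGroup X] [Module ℝ X] [TopologicalSpace X] [IsTopologicalAddGroup X]
    [ContinuousSMul ℝ X],
    IsCOn X k (TVS.ofType (ℝ × X)) (fun p => p.1 • p.2) Set.univ := by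
  intro k
  induction k with
  | zero => intro X _ _ _ _ _; exact continuous_smul.continuousOn
  | succ k ih =>
    intro X _ _ _ _ _
    refine (isCOn_succ k _ _).2 ?_
    refine ⟨fun p => p.2.1.1 • p.1.2 + (p.1.1 • p.2.1.2 + p.2.2 • (p.2.1.1 • p.2.1.2)), ?_, ?_⟩
    · rintro ⟨t, x⟩ ⟨τ, ξ⟩ s - -
      show (t + s * τ) • (x + s • ξ) - t • x = s • (τ • x + (t • ξ + s • τ • ξ))
      module
    · have huniv : SQ (Set.univ : Set (ℝ × X)) = Set.univ :=
        Set.eq_univ_of_forall fun p => ⟨trivial, trivial⟩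
      suffices H : IsCOn X k (TVS.ofType ((ℝ×X) × (ℝ×X) × ℝ)) (fun p => p.2.1.1 • p.1.2 + (p.1.1 • p.2.1.2 + p.2.2 • (p.2.1.1 • p.2.1.2))) Set.univ from isCOn_mono k _ _ _ _ (Set.subset_univ _) H
      have la : IsCOn X k (TVS.ofType ((ℝ×X) × (ℝ×X) × ℝ))
          (fun p => p.2.1.1 • p.1.2) Set.univ := by
        have := isCOn_preLin k (fun q : ℝ × X => q.1 • q.2) Set.univ
          (fun p : (ℝ×X) × (ℝ×X) × ℝ => ((p.2.1.1, p.1.2) : ℝ × X))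
          ⟨fun a b => rfl, fun c a => rfl⟩
          ((continuous_fst.comp (continuous_fst.comp continuous_snd)).prodMk
            (continuous_snd.comp continuous_fst)) ih
        exact this
      have lb : IsCOn X k (TVS.ofType ((ℝ×X) × (ℝ×X) × ℝ))
          (fun p => p.1.1 • p.2.1.2) Set.univ := by
        have := isCOn_preLin k (fun q : ℝ × X => q.1 • q.2) Set.univ
          (fun p : (ℝ×X) × (ℝ×X) × ℝ => ((p.1.1, p.2.1.2) : ℝ × X))
          ⟨fun a b => rfl, fun c a => rfl⟩
          ((continuous_fst.comp continuous_fst).prodMk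
            (continuous_snd.comp (continuous_fst.comp continuous_snd))) ih
        exact this
      have lc0 : IsCOn X k (TVS.ofType ((ℝ×X) × (ℝ×X) × ℝ))
          (fun p => p.2.1.1 • p.2.1.2) Set.univ := by
        have := isCOn_preLin k (fun q : ℝ × X => q.1 • q.2) Set.univ
          (fun p : (ℝ×X) × (ℝ×X) × ℝ => ((p.2.1.1, p.2.1.2) : ℝ × X))
          ⟨fun a b => rfl, fun c a => rfl⟩
          ((continuous_fst.comp (continuous_fst.comp continuous_snd)).prodMk
            (continuous_snd.comp (continuous_fst.comp continuous_snd))) ih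
        exact this
      have lc : IsCOn X k (TVS.ofType ((ℝ×X) × (ℝ×X) × ℝ))
          (fun p => p.2.2 • (p.2.1.1 • p.2.1.2)) Set.univ := by
        have hpr : IsCOn (ℝ × X) k (TVS.ofType ((ℝ×X) × (ℝ×X) × ℝ))
            (fun p => ((p.2.2, p.2.1.1 • p.2.1.2) : ℝ × X)) Set.univ :=
          isCOn_pair k _ _ _
            (isCOn_lin k _ ⟨fun a b => rfl, fun c a => rfl⟩
              (continuous_snd.comp continuous_snd) _) lc0
        exact isCOn_comp k (fun q : ℝ × X => q.1 • q.2) Set.univ _ Set.univ ih hpr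
          (fun p _ => trivial)
      exact isCOn_add la (isCOn_add lb lc)

theorem isCOn_smulc {k : ℕ} {Z X : Type}
    [AddCommGroup Z] [Module ℝ Z] [TopologicalSpace Z] [IsTopologicalAddGroup Z]
    [AddCommGroup X] [Module ℝ X] [TopologicalSpace X] [IsTopologicalAddGroup X]
    [ContinuousSMul ℝ X]
    {a : Z → ℝ} {b : Z → X} {W : Set Z}
    (ha : IsCOn ℝ k (TVS.ofType Z) a W) (hb : IsCOn X k (TVS.ofType Z) b W) :
    IsCOn X k (TVS.ofType Z) (fun z => a z • b z) W :=
  isCOn_comp k (fun q : ℝ × X => q.1 • q.2) Set.univ (fun z => (a z, b z)) W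
    (isCOn_smul_univ k) (isCOn_pair k a b W ha hb) (fun z _ => trivial)

section Main

variable {E₀ E₁ F₁ : Type}
  [AddCommGroup E₀] [Module ℝ E₀] [TopologicalSpace E₀]
  [AddCommGroup E₁] [Module ℝ E₁] [TopologicalSpace E₁]
  [AddCommGroup F₁] [Module ℝ F₁] [TopologicalSpace F₁]

theorem glin_aux (U : Set E₀) (h : E₀ × E₁ → F₁)
    (hlin : ∀ x ∈ U, IsLinearMap ℝ (fun w => h (x, w)))
    (hbij : ∀ x ∈ U, Function.Bijective (fun w => h (x, w)))
    (g : E₀ × F₁ → E₁)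
    (hg : ∀ x ∈ U, ∀ v : F₁, h (x, g (x, v)) = v)
    (x : E₀) (hx : x ∈ U) : IsLinearMap ℝ (fun w => g (x, w)) := by
  have hinj := (hbij x hx).injective
  constructor
  · intro w₁ w₂
    apply hinj
    show h (x, g (x, w₁ + w₂)) = h (x, g (x, w₁) + g (x, w₂))
    rw [hg x hx, (hlin x hx).map_add, hg x hx, hg x hx]
  · intro c w
    apply hinj
    show h (x, g (x, c • w)) = h (x, c • g (x, w))
    rw [hg x hx, (hlin x hx).map_smul, hg x hx]

theorem keyId (U : Set E₀) (h : E₀ × E₁ → F₁)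
    (hlin : ∀ x ∈ U, IsLinearMap ℝ (fun w => h (x, w)))
    (hbij : ∀ x ∈ U, Function.Bijective (fun w => h (x, w)))
    (g : E₀ × F₁ → E₁)
    (hg : ∀ x ∈ U, ∀ v : F₁, h (x, g (x, v)) = v)
    (h1 : (E₀ × E₁) × (E₀ × E₁) × ℝ → F₁)
    (hhid : ∀ p q t, p ∈ U ×ˢ (Set.univ : Set E₁) → p + t • q ∈ U ×ˢ (Set.univ : Set E₁) →
      h (p + t • q) - h p = t • h1 (p, q, t))
    (x u : E₀) (v ν : F₁) (t : ℝ) (hx : x ∈ U) (hxt : x + t • u ∈ U) :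
    g ((x, v) + t • (u, ν)) - g (x, v) =
      t • g (x + t • u, ν - h1 ((x, g (x, v)), (u, 0), t)) := by
  set a := g (x, v) with ha
  set w := h1 ((x, a), (u, 0), t) with hw
  have hinj := (hbij _ hxt).injective
  have e0 : ((x, a) + t • ((u, 0) : E₀ × E₁)) = (x + t • u, a) := by
    simp [Prod.ext_iff]
  have e1 : h (x + t • u, a) = v + t • w := by
    have h2 := hhid (x, a) (u, 0) t ⟨hx, trivial⟩ (by rw [e0]; exact ⟨hxt, trivial⟩)
    rw [e0, hg x hx] at h2
    rw [← hw] at h2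
    rw [← h2]; abel
  have e2 : g (x + t • u, v + t • w) = a := by
    apply hinj
    show h (x + t • u, g (x + t • u, v + t • w)) = h (x + t • u, a)
    rw [hg _ hxt, e1]
  have gl := glin_aux U h hlin hbij g hg (x + t • u) hxt
  have eadd : ((x, v) + t • ((u, ν) : E₀ × F₁)) = (x + t • u, v + t • ν) := by
    simp [Prod.ext_iff]
  calc g ((x, v) + t • (u, ν)) - g (x, v)
      = g (x + t • u, v + t • ν) - g (x + t • u, v + t • w) := by rw [eadd, e2, ← ha]
    _ = g (x + t • u, (v + t • ν) - (v + t • w)) := (gl.map_sub _ _).symm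
    _ = g (x + t • u, t • (ν - w)) := by
        congr 1
        rw [smul_sub]; abel
    _ = t • g (x + t • u, ν - w) := gl.map_smul t _

end Main

/-- Let `h : U × E₁ → F₁` be smooth (`U ⊆ E₀` open) with each
`h_x := h(x,·) : E₁ → F₁` linear and invertible.  If `g : U × F₁ → E₁`,
`(x,v) ↦ h_x⁻¹(v)` is continuous, then `g` is smooth and its partial derivative
in the first variable satisfies `d₁g(x,v)(u) = -g(x, d₁h(x, g(x,v))(u))` for
`x ∈ U`, `v ∈ F₁`, `u ∈ E₀`.  (Partial derivatives `d₁` are directional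
derivatives in directions `(u,0)`; the formula is expressed against any value
`w = d₁h(x, g(x,v))(u)` of the — by Hausdorffness unique — derivative of `h`.) -/
theorem stmt_8 {E₀ E₁ F₁ : Type}
    [AddCommGroup E₀] [Module ℝ E₀] [TopologicalSpace E₀]
    [IsTopologicalAddGroup E₀] [ContinuousSMul ℝ E₀] [T2Space E₀] [LocallyConvexSpace ℝ E₀]
    [AddCommGroup E₁] [Module ℝ E₁] [TopologicalSpace E₁]
    [IsTopologicalAddGroup E₁] [ContinuousSMul ℝ E₁] [T2Space E₁] [LocallyConvexSpace ℝ E₁]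
    [AddCommGroup F₁] [Module ℝ F₁] [TopologicalSpace F₁]
    [IsTopologicalAddGroup F₁] [ContinuousSMul ℝ F₁] [T2Space F₁] [LocallyConvexSpace ℝ F₁]
    (U : Set E₀) (hU : IsOpen U)
    (h : E₀ × E₁ → F₁)
    (hsmooth : IsSmoothOn F₁ (TVS.ofType (E₀ × E₁)) h (U ×ˢ (Set.univ : Set E₁)))
    (hlin : ∀ x ∈ U, IsLinearMap ℝ (fun w => h (x, w)))
    (hbij : ∀ x ∈ U, Function.Bijective (fun w => h (x, w)))
    (g : E₀ × F₁ → E₁)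
    (hg : ∀ x ∈ U, ∀ v : F₁, h (x, g (x, v)) = v)
    (hgcont : ContinuousOn g (U ×ˢ (Set.univ : Set F₁))) :
    IsSmoothOn E₁ (TVS.ofType (E₀ × F₁)) g (U ×ˢ (Set.univ : Set F₁)) ∧
    ∀ x ∈ U, ∀ (v : F₁) (u : E₀) (w : F₁),
      IsDirDerivOn (U ×ˢ (Set.univ : Set E₁)) h (x, g (x, v)) (u, 0) w →
      IsDirDerivOn (U ×ˢ (Set.univ : Set F₁)) g (x, v) (u, 0) (-(g (x, w))) := by
  -- Part 1: smoothness of g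
  have gk : ∀ k, IsCOn E₁ k (TVS.ofType (E₀ × F₁)) g (U ×ˢ (Set.univ : Set F₁)) := by
    intro k
    induction k with
    | zero => exact hgcont
    | succ k ih =>
      obtain ⟨h1, hhid, hh1⟩ := (isCOn_succ k h (U ×ˢ (Set.univ : Set E₁))).mp (hsmooth (k+1))
      rw [isCOn_succ]
      refine ⟨fun p => g (p.1.1 + p.2.2 • p.2.1.1,
        p.2.1.2 - h1 ((p.1.1, g p.1), (p.2.1.1, 0), p.2.2)), ?_, ?_⟩
      · rintro ⟨x, v⟩ ⟨u, ν⟩ t ⟨hx, -⟩ hxt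
        exact keyId U h hlin hbij g hg h1 hhid x u v ν t hx hxt.1
      · -- regularity
        have cg1 : IsCOn E₁ k (TVS.ofType ((E₀×F₁) × (E₀×F₁) × ℝ))
            (fun p => g p.1) (SQ (U ×ˢ (Set.univ : Set F₁))) := by
          refine isCOn_mono k (TVS.ofType ((E₀×F₁) × (E₀×F₁) × ℝ)) _
            (Prod.fst ⁻¹' (U ×ˢ (Set.univ : Set F₁))) (SQ (U ×ˢ (Set.univ : Set F₁)))
            (fun p hp => hp.1) ?_
          exact isCOn_preLin k g (U ×ˢ (Set.univ : Set F₁)) Prod.fst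
            ⟨fun a b => rfl, fun c a => rfl⟩ continuous_fst ih
        have cΨ1 : IsCOn E₀ k (TVS.ofType ((E₀×F₁) × (E₀×F₁) × ℝ))
            (fun p => p.1.1 + p.2.2 • p.2.1.1) (SQ (U ×ˢ (Set.univ : Set F₁))) := by
          refine isCOn_add (isCOn_lin k (fun p : (E₀×F₁) × (E₀×F₁) × ℝ => p.1.1)
            ⟨fun a b => rfl, fun c a => rfl⟩ (by fun_prop) _) (isCOn_smulc ?_ ?_)
          · exact isCOn_lin k (fun p : (E₀×F₁) × (E₀×F₁) × ℝ => p.2.2)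
              ⟨fun a b => rfl, fun c a => rfl⟩ (by fun_prop) _
          · exact isCOn_lin k (fun p : (E₀×F₁) × (E₀×F₁) × ℝ => p.2.1.1)
              ⟨fun a b => rfl, fun c a => rfl⟩ (by fun_prop) _
        have cΘ : IsCOn ((E₀×E₁) × (E₀×E₁) × ℝ) k (TVS.ofType ((E₀×F₁) × (E₀×F₁) × ℝ))
            (fun p => (((p.1.1, g p.1), (p.2.1.1, 0), p.2.2) : (E₀×E₁) × (E₀×E₁) × ℝ))
            (SQ (U ×ˢ (Set.univ : Set F₁))) := by
          refine isCOn_pair k _ _ _ (isCOn_pair k _ _ _ ?_ cg1) (isCOn_pair k _ _ _ ?_ ?_)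
          · exact isCOn_lin k (fun p : (E₀×F₁) × (E₀×F₁) × ℝ => p.1.1)
              ⟨fun a b => rfl, fun c a => rfl⟩ (by fun_prop) _
          · refine isCOn_lin k (fun p : (E₀×F₁) × (E₀×F₁) × ℝ => ((p.2.1.1, 0) : E₀ × E₁))
              ⟨fun a b => by simp [Prod.ext_iff], fun c a => by simp [Prod.ext_iff]⟩ ?_ _
            exact (continuous_fst.comp (continuous_fst.comp continuous_snd)).prodMk
              continuous_const
          · exact isCOn_lin k (fun p : (E₀×F₁) × (E₀×F₁) × ℝ => p.2.2)
              ⟨fun a b => rfl, fun c a => rfl⟩ (by fun_prop) _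
        have ch1Θ : IsCOn F₁ k (TVS.ofType ((E₀×F₁) × (E₀×F₁) × ℝ))
            (fun p => h1 ((p.1.1, g p.1), (p.2.1.1, 0), p.2.2))
            (SQ (U ×ˢ (Set.univ : Set F₁))) := by
          refine isCOn_comp k h1 (SQ (U ×ˢ (Set.univ : Set E₁))) _ _ hh1 cΘ ?_
          rintro ⟨⟨x, v⟩, ⟨u, ν⟩, t⟩ ⟨hx, hxt⟩
          exact ⟨⟨hx.1, trivial⟩, ⟨hxt.1, trivial⟩⟩
        have cΨ2 : IsCOn F₁ k (TVS.ofType ((E₀×F₁) × (E₀×F₁) × ℝ))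
            (fun p => p.2.1.2 - h1 ((p.1.1, g p.1), (p.2.1.1, 0), p.2.2))
            (SQ (U ×ˢ (Set.univ : Set F₁))) := by
          refine isCOn_sub ?_ ch1Θ
          exact isCOn_lin k (fun p : (E₀×F₁) × (E₀×F₁) × ℝ => p.2.1.2)
            ⟨fun a b => rfl, fun c a => rfl⟩ (by fun_prop) _
        refine isCOn_comp k g (U ×ˢ (Set.univ : Set F₁)) _ _ ih
          (isCOn_pair k _ _ _ cΨ1 cΨ2) ?_
        rintro ⟨⟨x, v⟩, ⟨u, ν⟩, t⟩ ⟨hx, hxt⟩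
        exact ⟨hxt.1, trivial⟩
  refine ⟨gk, ?_⟩
  -- Part 2: the derivative formula
  intro x hx v u w hw
  obtain ⟨h1, hhid, hh1⟩ := (isCOn_succ 0 h (U ×ˢ (Set.univ : Set E₁))).mp (hsmooth 1)
  set a := g (x, v) with ha
  set T : Set ℝ := {t : ℝ | t ≠ 0 ∧ x + t • u ∈ U} with hT
  have hTh : {t : ℝ | t ≠ 0 ∧ (x, a) + t • ((u, 0) : E₀ × E₁) ∈ U ×ˢ (Set.univ : Set E₁)} = T := by
    ext t; simp [hT, Set.mem_prod]
  have hTg : {t : ℝ | t ≠ 0 ∧ (x, v) + t • ((u, 0) : E₀ × F₁) ∈ U ×ˢ (Set.univ : Set F₁)} = T := by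
    ext t; simp [hT, Set.mem_prod]
  have hmemT : ∀ t ∈ T, x + t • u ∈ U := fun t ht => ht.2
  -- h1 along the path
  have φcont : Filter.Tendsto (fun t : ℝ => (((x, a), (u, 0), t) : (E₀×E₁) × (E₀×E₁) × ℝ))
      (nhdsWithin 0 T) (nhdsWithin ((x, a), (u, 0), 0) (SQ (U ×ˢ (Set.univ : Set E₁)))) := by
    rw [tendsto_nhdsWithin_iff]
    constructor
    · exact ((continuous_const.prodMk (continuous_const.prodMk continuous_id)).tendsto 0).mono_left
        nhdsWithin_le_nhds
    · exact eventually_mem_nhdsWithin.mono fun t ht =>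
        ⟨⟨hx, trivial⟩, ⟨by simpa using ht.2, trivial⟩⟩
  have L1 : Filter.Tendsto (fun t : ℝ => h1 ((x, a), (u, 0), t)) (nhdsWithin 0 T)
      (nhds (h1 ((x, a), (u, 0), 0))) := by
    have hm : (((x, a), (u, 0), 0) : (E₀×E₁) × (E₀×E₁) × ℝ) ∈ SQ (U ×ˢ (Set.univ : Set E₁)) :=
      ⟨⟨hx, trivial⟩, ⟨by simpa using hx, trivial⟩⟩
    exact (hh1 _ hm).tendsto.comp φcont
  -- the quotient for h equals h1 on T
  have hquot : ∀ t ∈ T, t⁻¹ • (h ((x, a) + t • ((u, 0) : E₀ × E₁)) - h (x, a))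
      = h1 ((x, a), (u, 0), t) := by
    intro t ht
    have hm1 : ((x, a) : E₀ × E₁) ∈ U ×ˢ (Set.univ : Set E₁) := ⟨hx, trivial⟩
    have hm2 : ((x, a) + t • ((u, 0) : E₀ × E₁)) ∈ U ×ˢ (Set.univ : Set E₁) :=
      ⟨by simpa using ht.2, trivial⟩
    rw [hhid (x, a) (u, 0) t hm1 hm2, smul_smul, inv_mul_cancel₀ ht.1, one_smul]
  -- NeBot of the filter
  have hne : (nhdsWithin (0:ℝ) T).NeBot := by
    have hev : ∀ᶠ t : ℝ in nhds 0, x + t • u ∈ U := by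
      have hc : Continuous (fun t : ℝ => x + t • u) :=
        continuous_const.add (continuous_id.smul continuous_const)
      have := hc.tendsto 0
      simp only [zero_smul, add_zero] at this
      exact this.eventually (hU.eventually_mem hx)
    obtain ⟨ε, hε, hball⟩ := Metric.eventually_nhds_iff.mp hev
    have hsub : Set.Ioo (0:ℝ) ε ⊆ T := by
      intro t ht
      refine ⟨ne_of_gt ht.1, hball ?_⟩
      rw [Real.dist_eq, sub_zero, abs_of_pos ht.1]
      exact ht.2
    have h0c : (0:ℝ) ∈ closure (Set.Ioo (0:ℝ) ε) := by
      rw [closure_Ioo (ne_of_lt hε)]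
      exact ⟨le_refl 0, le_of_lt hε⟩
    exact mem_closure_iff_nhdsWithin_neBot.mp (closure_mono hsub h0c)
  haveI := hne
  -- identify w
  have hwval : w = h1 ((x, a), (u, 0), 0) := by
    have hw' : Filter.Tendsto (fun t : ℝ => h1 ((x, a), (u, 0), t)) (nhdsWithin 0 T)
        (nhds w) := by
      unfold IsDirDerivOn at hw
      rw [hTh] at hw
      exact hw.congr' (eventually_mem_nhdsWithin.mono fun t ht => (hquot t ht))
    exact tendsto_nhds_unique hw' L1
  -- conclude
  have glx := glin_aux U h hlin hbij g hg x hx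
  have key : ∀ t ∈ T, t⁻¹ • (g ((x, v) + t • ((u, 0) : E₀ × F₁)) - g (x, v))
      = g (x + t • u, -h1 ((x, a), (u, 0), t)) := by
    intro t ht
    have hk := keyId U h hlin hbij g hg h1 hhid x u v 0 t hx (hmemT t ht)
    rw [hk, smul_smul, inv_mul_cancel₀ ht.1, one_smul, zero_sub]
  have lim2 : Filter.Tendsto (fun t : ℝ => g (x + t • u, -h1 ((x, a), (u, 0), t)))
      (nhdsWithin 0 T) (nhds (g (x, -w))) := by
    have hx' : ((x, -w) : E₀ × F₁) ∈ U ×ˢ (Set.univ : Set F₁) := ⟨hx, trivial⟩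
    have hmap : Filter.Tendsto (fun t : ℝ => ((x + t • u, -h1 ((x, a), (u, 0), t)) : E₀ × F₁))
        (nhdsWithin 0 T) (nhdsWithin (x, -w) (U ×ˢ (Set.univ : Set F₁))) := by
      rw [tendsto_nhdsWithin_iff]
      constructor
      · refine Filter.Tendsto.prodMk_nhds ?_ ?_
        · have hc : Continuous (fun t : ℝ => x + t • u) := by fun_prop
          have h2 := hc.tendsto 0
          simp only [zero_smul, add_zero] at h2
          exact h2.mono_left nhdsWithin_le_nhds
        · have := L1.neg
          rw [← hwval] at this
          exact this
      · exact eventually_mem_nhdsWithin.mono fun t ht => ⟨hmemT t ht, trivial⟩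
    exact (hgcont _ hx').tendsto.comp hmap
  have hneg : g (x, -w) = -g (x, w) := glx.map_neg w
  rw [hneg] at lim2
  unfold IsDirDerivOn
  rw [hTg]
  exact lim2.congr' (eventually_mem_nhdsWithin.mono fun t ht => (key t ht).symm)
end

section
/- A morphism f : E → E' of k-dimensional cubes, given by component maps f^ν for partitions ν of subsets I ⊆ {1,…,k}, is invertible (with inverse again a morphism of k-dimensional cubes) if and only if f^{{I}} : E_I → E'_I is bijective for every nonempty I ⊆ {1,…,k}, i.e. for all partitions of length one. -/
open Finset

/-- A (locally convex) `k`-dimensional cube: a family of real vector spaces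
`E_I` indexed by the subsets `I ⊆ {1,…,k}` (only the nonempty `I` matter). -/
structure Cube (k : ℕ) : Type 1 where
  ax : Finset (Fin k) → Type
  grp : ∀ I, AddCommGroup (ax I)
  mod : ∀ I, Module ℝ (ax I)

attribute [instance] Cube.grp Cube.mod

/-- The total space `E = ⊕_{∅ ≠ I ⊆ {1,…,k}} E_I` of a cube. -/
abbrev Cube.Total {k : ℕ} (E : Cube k) : Type :=
  ∀ I : {I : Finset (Fin k) // I.Nonempty}, E.ax I.1

noncomputable instance {k : ℕ} (I : Finset (Fin k)) : Fintype (Finpartition I) :=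
  Fintype.ofInjective Finpartition.parts (by
    intro P Q h
    exact Finpartition.ext h)

/-- Blocks of a finpartition of a finset are nonempty. -/
theorem Finpartition.block_nonempty {k : ℕ} {I : Finset (Fin k)} (ν : Finpartition I)
    {L : Finset (Fin k)} (hL : L ∈ ν.parts) : L.Nonempty :=
  Finset.nonempty_iff_ne_empty.mpr (fun h => ν.bot_notMem (by simpa [h] using hL))

/-- A morphism of `k`-dimensional cubes: for every partition `ν` of every
`I ⊆ {1,…,k}` a multilinear map `f^ν : E_{ν₁} × ⋯ × E_{ν_ℓ(ν)} → E'_I`. -/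
structure CubeHom {k : ℕ} (E E' : Cube k) : Type where
  comp : ∀ (I : Finset (Fin k)) (ν : Finpartition I),
    MultilinearMap ℝ (fun L : ν.parts => E.ax L.1) (E'.ax I)

/-- The map on total spaces induced by a cube morphism:
`(v_I)_I ↦ (Σ_{ν ∈ Part(I)} f^ν(v_{ν₁},…,v_{ν_ℓ(ν)}))_I`. -/
noncomputable def CubeHom.toFun {k : ℕ} {E E' : Cube k} (f : CubeHom E E')
    (v : E.Total) : E'.Total := fun I =>
  ∑ ν : Finpartition I.1,
    f.comp I.1 ν (fun L => v ⟨L.1, Finpartition.block_nonempty ν L.2⟩)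

/-- The component `f^{{I}} : E_I → E'_I` of a cube morphism at the length-one
partition `{I}` of a nonempty `I ⊆ {1,…,k}`. -/
noncomputable def CubeHom.oneBlock {k : ℕ} {E E' : Cube k} (f : CubeHom E E')
    (I : Finset (Fin k)) (hI : I.Nonempty) : E.ax I → E'.ax I := fun x =>
  f.comp I (Finpartition.indiscrete (Finset.nonempty_iff_ne_empty.mp hI))
    (fun L => cast (congrArg E.ax
      ((Finset.mem_singleton.mp L.2).symm : I = L.1)) x)

noncomputable section Stmt9Aux

open Function

variable {k : ℕ} {E E' : Cube k}

/-- The indiscrete finpartition of a nonempty finset. -/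
def indisc {I : Finset (Fin k)} (hI : I.Nonempty) : Finpartition I :=
  Finpartition.indiscrete (Finset.nonempty_iff_ne_empty.mp hI)

theorem indisc_parts {I : Finset (Fin k)} (hI : I.Nonempty) :
    (indisc hI).parts = {I} := rfl

theorem indisc_subsingleton {I : Finset (Fin k)} (hI : I.Nonempty) :
    Subsingleton {L // L ∈ (indisc hI).parts} :=
  ⟨fun a b => Subtype.ext (by
    have ha := Finset.mem_singleton.mp a.2
    have hb := Finset.mem_singleton.mp b.2
    rw [ha, hb])⟩

/-- The canonical argument tuple for a partition, extracted from a total vector. -/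
def carg {F : Cube k} (v : F.Total) {I : Finset (Fin k)} (ν : Finpartition I) :
    ∀ L : ν.parts, F.ax L.1 :=
  fun L => v ⟨L.1, ν.block_nonempty L.2⟩

theorem toFun_eq (f : CubeHom E E') (v : E.Total) (J : {I : Finset (Fin k) // I.Nonempty}) :
    f.toFun v J = ∑ ν : Finpartition J.1, f.comp J.1 ν (carg v ν) := rfl

theorem comp_indisc (f : CubeHom E E') {I : Finset (Fin k)} (hI : I.Nonempty) (v : E.Total) :
    f.comp I (indisc hI) (carg v (indisc hI)) = f.oneBlock I hI (v ⟨I, hI⟩) := by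
  unfold CubeHom.oneBlock
  exact congrArg (f.comp I (indisc hI)) (funext fun L => by
    rcases L with ⟨L, hL⟩
    have h : L = I := Finset.mem_singleton.mp hL
    subst h
    exact (cast_eq _ _).symm)

/-- The "delta" total vector supported at one component. -/
def delta {F : Cube k} {I : Finset (Fin k)} (hI : I.Nonempty) (x : F.ax I) : F.Total :=
  fun J => if h : J.1 = I then cast (congrArg F.ax h.symm) x else 0

theorem delta_same {F : Cube k} {I : Finset (Fin k)} (hI : I.Nonempty) (x : F.ax I) :
    delta hI x ⟨I, hI⟩ = x := by
  simp [delta]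

theorem delta_other {F : Cube k} {I J : Finset (Fin k)} (hI : I.Nonempty) (x : F.ax I)
    (hJ : J.Nonempty) (h : J ≠ I) : delta hI x ⟨J, hJ⟩ = 0 := dif_neg h

theorem parts_eq_top {I : Finset (Fin k)} (hI : I.Nonempty) (ν : Finpartition I)
    (h : ∀ L ∈ ν.parts, L = I) : ν = indisc hI := by
  apply Finpartition.ext
  rw [indisc_parts]
  rw [Finset.eq_singleton_iff_nonempty_unique_mem]
  refine ⟨ν.parts_nonempty ?_, h⟩
  simpa using hI.ne_empty

theorem exists_ne_of_ne_indisc {I : Finset (Fin k)} (hI : I.Nonempty) (ν : Finpartition I)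
    (h : ν ≠ indisc hI) : ∃ L ∈ ν.parts, L ≠ I := by
  by_contra hc
  push_neg at hc
  exact h (parts_eq_top hI ν hc)

theorem eq_of_parts_all_eq {J I : Finset (Fin k)} (hJ : J.Nonempty) (ν : Finpartition J)
    (h : ∀ L ∈ ν.parts, L = I) : J = I := by
  have hp : ν.parts = {I} := by
    rw [Finset.eq_singleton_iff_nonempty_unique_mem]
    exact ⟨ν.parts_nonempty (by simpa using hJ.ne_empty), h⟩
  have := ν.sup_parts
  rw [hp] at this
  simpa using this.symm

theorem eq_indisc_of_top_mem {I : Finset (Fin k)} (hI : I.Nonempty) {ν : Finpartition I}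
    (h : I ∈ ν.parts) : ν = indisc hI := by
  apply parts_eq_top hI
  intro L hL
  by_contra hne
  have hd : Disjoint I L := ν.disjoint h hL (fun hIL => hne hIL.symm)
  have : L = ⊥ := (hd.symm).eq_bot_of_le (ν.le hL)
  exact ν.ne_bot hL this

theorem toFun_delta (f : CubeHom E E') {I : Finset (Fin k)} (hI : I.Nonempty) (x : E.ax I) :
    f.toFun (delta hI x) = delta hI (f.oneBlock I hI x) := by
  funext J
  rcases J with ⟨J, hJ⟩
  rw [toFun_eq]
  by_cases h : J = I
  · subst h
    rw [delta_same]
    rw [Fintype.sum_eq_single (indisc hJ)]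
    · rw [comp_indisc f hJ, delta_same]
    · intro ν hν
      obtain ⟨L, hL, hLne⟩ := exists_ne_of_ne_indisc hJ ν hν
      exact (f.comp J ν).map_coord_zero (⟨L, hL⟩ : ν.parts) (dif_neg hLne)
  · rw [delta_other hI _ hJ h]
    apply Finset.sum_eq_zero
    intro ν _
    have hex : ∃ L ∈ ν.parts, L ≠ I := by
      by_contra hc
      push_neg at hc
      exact h (eq_of_parts_all_eq hJ ν hc)
    obtain ⟨L, hL, hLne⟩ := hex
    exact (f.comp J ν).map_coord_zero (⟨L, hL⟩ : ν.parts) (dif_neg hLne)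

theorem indisc_le {I : Finset (Fin k)} (hI : I.Nonempty) {ν : Finpartition I}
    (h : indisc hI ≤ ν) : ν = indisc hI := by
  obtain ⟨c, hc, hIc⟩ := h (Finset.mem_singleton_self I)
  have : c = I := le_antisymm (ν.le hc) hIc
  exact eq_indisc_of_top_mem hI (this ▸ hc)

theorem part_ssubset {I : Finset (Fin k)} (hI : I.Nonempty) {ν : Finpartition I}
    (hν : ν ≠ indisc hI) {L : Finset (Fin k)} (hL : L ∈ ν.parts) : L ⊂ I := by
  rw [Finset.ssubset_iff_subset_ne]
  refine ⟨Finset.le_iff_subset.mp (ν.le hL), fun h => ?_⟩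
  exact hν (eq_indisc_of_top_mem hI (h ▸ hL))

/-- Canonical element of the parts of the indiscrete partition. -/
def i0 {I : Finset (Fin k)} (hI : I.Nonempty) : {L // L ∈ (indisc hI).parts} :=
  ⟨I, Finset.mem_singleton_self I⟩

/-- The argument tuple of `oneBlock`. -/
def argOf {F : Cube k} {I : Finset (Fin k)} (hI : I.Nonempty) (x : F.ax I) :
    ∀ L : (indisc hI).parts, F.ax L.1 :=
  fun L => cast (congrArg F.ax ((Finset.mem_singleton.mp L.2).symm : I = L.1)) x

theorem oneBlock_eq (f : CubeHom E E') {I : Finset (Fin k)} (hI : I.Nonempty) (x : E.ax I) :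
    f.oneBlock I hI x = f.comp I (indisc hI) (argOf hI x) := rfl

theorem argOf_update {F : Cube k} {I : Finset (Fin k)} (hI : I.Nonempty) (x : F.ax I) :
    argOf hI x = Function.update (argOf hI (0 : F.ax I)) (i0 hI) x := by
  haveI := indisc_subsingleton (k := k) hI
  funext L
  have hL : L = i0 hI := Subsingleton.elim _ _
  subst hL
  exact (cast_eq _ _).trans (Function.update_self (i0 hI) x (argOf hI 0)).symm

theorem oneBlock_add (f : CubeHom E E') {I : Finset (Fin k)} (hI : I.Nonempty) (x y : E.ax I) :
    f.oneBlock I hI (x + y) = f.oneBlock I hI x + f.oneBlock I hI y := by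
  classical
  rw [oneBlock_eq, oneBlock_eq, oneBlock_eq, argOf_update hI (x + y), argOf_update hI x,
    argOf_update hI y]
  exact (f.comp I (indisc hI)).map_update_add _ _ _ _

theorem oneBlock_smul (f : CubeHom E E') {I : Finset (Fin k)} (hI : I.Nonempty) (c : ℝ)
    (x : E.ax I) : f.oneBlock I hI (c • x) = c • f.oneBlock I hI x := by
  classical
  rw [oneBlock_eq, oneBlock_eq, argOf_update hI (c • x), argOf_update hI x]
  exact (f.comp I (indisc hI)).map_update_smul _ _ _ _

/-- `oneBlock` as a linear map. -/
def oneBlockLin (f : CubeHom E E') (I : Finset (Fin k)) (hI : I.Nonempty) :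
    E.ax I →ₗ[ℝ] E'.ax I where
  toFun := f.oneBlock I hI
  map_add' := oneBlock_add f hI
  map_smul' := oneBlock_smul f hI

section Inverse

variable (f : CubeHom E E') (hbij : ∀ (I : Finset (Fin k)) (hI : I.Nonempty),
  Function.Bijective (f.oneBlock I hI))

/-- The linear inverse of `oneBlock`. -/
def finv (I : Finset (Fin k)) (hI : I.Nonempty) : E'.ax I →ₗ[ℝ] E.ax I :=
  ((LinearEquiv.ofBijective (oneBlockLin f I hI) (hbij I hI)).symm : E'.ax I →ₗ[ℝ] E.ax I)

theorem finv_oneBlock (I : Finset (Fin k)) (hI : I.Nonempty) (x : E.ax I) :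
    finv f hbij I hI (f.oneBlock I hI x) = x :=
  (LinearEquiv.ofBijective (oneBlockLin f I hI) (hbij I hI)).symm_apply_apply x

theorem oneBlock_finv (I : Finset (Fin k)) (hI : I.Nonempty) (y : E'.ax I) :
    f.oneBlock I hI (finv f hbij I hI y) = y :=
  (LinearEquiv.ofBijective (oneBlockLin f I hI) (hbij I hI)).apply_symm_apply y

end Inverse

/-- Restriction of a refinement `μ ≤ ν` to a part `L` of `ν`. -/
def restr {I : Finset (Fin k)} (μ ν : Finpartition I) (hμν : μ ≤ ν) {L : Finset (Fin k)}
    (hL : L ∈ ν.parts) : Finpartition L where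
  parts := μ.parts.filter (· ⊆ L)
  supIndep := μ.supIndep.subset (Finset.filter_subset _ _)
  sup_parts := by
    apply le_antisymm
    · exact Finset.sup_le fun p hp => Finset.le_iff_subset.mpr (Finset.mem_filter.mp hp).2
    · rw [Finset.le_iff_subset]
      intro x hx
      have hxI : x ∈ I := Finset.le_iff_subset.mp (ν.le hL) hx
      have hx' : x ∈ μ.parts.sup id := by rw [μ.sup_parts]; exact hxI
      rw [Finset.mem_sup] at hx'
      obtain ⟨p, hp, hxp⟩ := hx'
      obtain ⟨c, hc, hpc⟩ := hμν hp
      have hcL : c = L := by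
        by_contra hne
        exact (Finset.disjoint_left.mp (ν.disjoint hc hL hne))
          (Finset.le_iff_subset.mp hpc hxp) hx
      rw [Finset.mem_sup]
      exact ⟨p, Finset.mem_filter.mpr ⟨hp, Finset.le_iff_subset.mp (hcL ▸ hpc)⟩, hxp⟩
  bot_notMem h := μ.bot_notMem (Finset.mem_filter.mp h).1

theorem mem_of_mem_restr {I : Finset (Fin k)} {μ ν : Finpartition I} {hμν : μ ≤ ν}
    {L : Finset (Fin k)} {hL : L ∈ ν.parts} {P : Finset (Fin k)}
    (hP : P ∈ (restr μ ν hμν hL).parts) : P ∈ μ.parts :=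
  (Finset.mem_filter.mp hP).1

theorem subset_of_mem_restr {I : Finset (Fin k)} {μ ν : Finpartition I} {hμν : μ ≤ ν}
    {L : Finset (Fin k)} {hL : L ∈ ν.parts} {P : Finset (Fin k)}
    (hP : P ∈ (restr μ ν hμν hL).parts) : P ⊆ L :=
  (Finset.mem_filter.mp hP).2

theorem bind_le {I : Finset (Fin k)} (ν : Finpartition I)
    (p : ∀ L ∈ ν.parts, Finpartition L) : ν.bind p ≤ ν := by
  intro b hb
  rw [Finpartition.mem_bind] at hb
  obtain ⟨A, hA, hb⟩ := hb
  exact ⟨A, hA, (p A hA).le hb⟩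

theorem bind_restr {I : Finset (Fin k)} (μ ν : Finpartition I) (hμν : μ ≤ ν) :
    (ν.bind fun L hL => restr μ ν hμν hL) = μ := by
  apply Finpartition.ext
  ext P
  rw [Finpartition.mem_bind]
  constructor
  · rintro ⟨L, hL, hP⟩
    exact (Finset.mem_filter.mp hP).1
  · intro hP
    obtain ⟨c, hc, hPc⟩ := hμν hP
    exact ⟨c, hc, Finset.mem_filter.mpr ⟨hP, Finset.le_iff_subset.mp hPc⟩⟩

theorem restr_bind {I : Finset (Fin k)} (ν : Finpartition I)
    (p : ∀ L ∈ ν.parts, Finpartition L) (hle : ν.bind p ≤ ν) {L : Finset (Fin k)}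
    (hL : L ∈ ν.parts) : restr (ν.bind p) ν hle hL = p L hL := by
  apply Finpartition.ext
  ext P
  constructor
  · intro hP
    obtain ⟨hPb, hPL⟩ := Finset.mem_filter.mp hP
    rw [Finpartition.mem_bind] at hPb
    obtain ⟨A, hA, hPA⟩ := hPb
    have hAL : A = L := by
      by_contra hne
      obtain ⟨x, hx⟩ := Finpartition.block_nonempty (p A hA) hPA
      exact (Finset.disjoint_left.mp (ν.disjoint hA hL hne))
        (Finset.le_iff_subset.mp ((p A hA).le hPA) hx) (hPL hx)
    subst hAL
    exact hPA
  · intro hP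
    exact Finset.mem_filter.mpr ⟨Finpartition.mem_bind.mpr ⟨L, hL, hP⟩,
      Finset.le_iff_subset.mp ((p L hL).le hP)⟩

section Composite

variable {I : Finset (Fin k)} (ν μ : Finpartition I) (hμν : μ ≤ ν)
  (D : ∀ L, L ∈ ν.parts → ∀ μ' : Finpartition L,
    MultilinearMap ℝ (fun P : μ'.parts => E'.ax P.1) (E.ax L))

theorem restr_arg_update_of_not_subset [DecidableEq {P // P ∈ μ.parts}]
    (x : ∀ P : μ.parts, E'.ax P.1) (P₀ : μ.parts) (a : E'.ax P₀.1)
    {L : Finset (Fin k)} (hL : L ∈ ν.parts) (h : ¬ P₀.1 ⊆ L) :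
    (fun P : (restr μ ν hμν hL).parts =>
        Function.update x P₀ a ⟨P.1, mem_of_mem_restr P.2⟩)
      = fun P : (restr μ ν hμν hL).parts => x ⟨P.1, mem_of_mem_restr P.2⟩ := by
  funext P
  apply Function.update_of_ne
  intro hPP
  apply h
  have h1 : P.1 = P₀.1 := congrArg Subtype.val hPP
  exact h1 ▸ subset_of_mem_restr P.2

theorem restr_arg_update_of_mem [DecidableEq {P // P ∈ μ.parts}]
    (x : ∀ P : μ.parts, E'.ax P.1) (P₀ : μ.parts) (a : E'.ax P₀.1)
    {L : Finset (Fin k)} (hL : L ∈ ν.parts)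
    (hmem : P₀.1 ∈ (restr μ ν hμν hL).parts) :
    (fun P : (restr μ ν hμν hL).parts =>
        Function.update x P₀ a ⟨P.1, mem_of_mem_restr P.2⟩)
      = Function.update
          (fun P : (restr μ ν hμν hL).parts => x ⟨P.1, mem_of_mem_restr P.2⟩)
          ⟨P₀.1, hmem⟩ a := by
  funext P
  by_cases hP : P = (⟨P₀.1, hmem⟩ : (restr μ ν hμν hL).parts)
  · subst hP
    exact (Function.update_self P₀ a x).trans
      (Function.update_self (⟨P₀.1, hmem⟩ : (restr μ ν hμν hL).parts) a
        (fun P => x ⟨P.1, mem_of_mem_restr P.2⟩)).symm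
  · rw [Function.update_of_ne hP]
    apply Function.update_of_ne
    intro hc
    apply hP
    apply Subtype.ext
    have h2 : P.1 = P₀.1 := congrArg Subtype.val hc
    exact h2

/-- The composition of an outer multilinear map along `ν` with inner multilinear maps
along the restrictions of a refinement `μ ≤ ν`, as a multilinear map indexed by the
parts of `μ`. -/
def composite (Φ : MultilinearMap ℝ (fun L : ν.parts => E.ax L.1) (E'.ax I)) :
    MultilinearMap ℝ (fun P : μ.parts => E'.ax P.1) (E'.ax I) where
  toFun x := Φ (fun L => D L.1 L.2 (restr μ ν hμν L.2)
    (fun P => x ⟨P.1, mem_of_mem_restr P.2⟩))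
  map_update_add' := by
    intro inst x P₀ a b
    obtain ⟨c, hc, hsub⟩ := hμν P₀.2
    have hsub' : P₀.1 ⊆ c := Finset.le_iff_subset.mp hsub
    have hmem : P₀.1 ∈ (restr μ ν hμν hc).parts := Finset.mem_filter.mpr ⟨P₀.2, hsub'⟩
    have key : ∀ (z : E'.ax P₀.1),
        (fun L : ν.parts => D L.1 L.2 (restr μ ν hμν L.2)
          (fun P => Function.update x P₀ z ⟨P.1, mem_of_mem_restr P.2⟩))
        = Function.update
            (fun L : ν.parts => D L.1 L.2 (restr μ ν hμν L.2)
              (fun P => x ⟨P.1, mem_of_mem_restr P.2⟩))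
            ⟨c, hc⟩
            (D c hc (restr μ ν hμν hc)
              (Function.update
                (fun P : (restr μ ν hμν hc).parts => x ⟨P.1, mem_of_mem_restr P.2⟩)
                ⟨P₀.1, hmem⟩ z)) := by
      intro z
      funext L
      by_cases hL : L = (⟨c, hc⟩ : ν.parts)
      · subst hL
        rw [Function.update_self]
        exact congrArg (D _ _ _) (restr_arg_update_of_mem ν μ hμν x P₀ z hc hmem)
      · rw [Function.update_of_ne hL]
        have hns : ¬ P₀.1 ⊆ L.1 := by
          intro hPL
          apply hL
          apply Subtype.ext
          by_contra hne
          obtain ⟨y, hy⟩ := μ.block_nonempty P₀.2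
          exact (Finset.disjoint_left.mp (ν.disjoint L.2 hc hne)) (hPL hy) (hsub' hy)
        exact congrArg (D _ _ _) (restr_arg_update_of_not_subset ν μ hμν x P₀ z L.2 hns)
    rw [key (a + b), key a, key b, (D c hc _).map_update_add, Φ.map_update_add]
  map_update_smul' := by
    intro inst x P₀ r a
    obtain ⟨c, hc, hsub⟩ := hμν P₀.2
    have hsub' : P₀.1 ⊆ c := Finset.le_iff_subset.mp hsub
    have hmem : P₀.1 ∈ (restr μ ν hμν hc).parts := Finset.mem_filter.mpr ⟨P₀.2, hsub'⟩
    have key : ∀ (z : E'.ax P₀.1),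
        (fun L : ν.parts => D L.1 L.2 (restr μ ν hμν L.2)
          (fun P => Function.update x P₀ z ⟨P.1, mem_of_mem_restr P.2⟩))
        = Function.update
            (fun L : ν.parts => D L.1 L.2 (restr μ ν hμν L.2)
              (fun P => x ⟨P.1, mem_of_mem_restr P.2⟩))
            ⟨c, hc⟩
            (D c hc (restr μ ν hμν hc)
              (Function.update
                (fun P : (restr μ ν hμν hc).parts => x ⟨P.1, mem_of_mem_restr P.2⟩)
                ⟨P₀.1, hmem⟩ z)) := by
      intro z
      funext L
      by_cases hL : L = (⟨c, hc⟩ : ν.parts)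
      · subst hL
        rw [Function.update_self]
        exact congrArg (D _ _ _) (restr_arg_update_of_mem ν μ hμν x P₀ z hc hmem)
      · rw [Function.update_of_ne hL]
        have hns : ¬ P₀.1 ⊆ L.1 := by
          intro hPL
          apply hL
          apply Subtype.ext
          by_contra hne
          obtain ⟨y, hy⟩ := μ.block_nonempty P₀.2
          exact (Finset.disjoint_left.mp (ν.disjoint L.2 hc hne)) (hPL hy) (hsub' hy)
        exact congrArg (D _ _ _) (restr_arg_update_of_not_subset ν μ hμν x P₀ z L.2 hns)
    rw [key (r • a), key a, (D c hc _).map_update_smul, Φ.map_update_smul]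

theorem composite_apply (Φ : MultilinearMap ℝ (fun L : ν.parts => E.ax L.1) (E'.ax I))
    (x : ∀ P : μ.parts, E'.ax P.1) :
    composite ν μ hμν D Φ x = Φ (fun L => D L.1 L.2 (restr μ ν hμν L.2)
      (fun P => x ⟨P.1, mem_of_mem_restr P.2⟩)) := rfl

theorem composite_congr {D' : ∀ L, L ∈ ν.parts → ∀ μ' : Finpartition L,
      MultilinearMap ℝ (fun P : μ'.parts => E'.ax P.1) (E.ax L)}
    (h : ∀ L (hL : L ∈ ν.parts) (μ' : Finpartition L), D L hL μ' = D' L hL μ')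
    (Φ : MultilinearMap ℝ (fun L : ν.parts => E.ax L.1) (E'.ax I)) :
    composite ν μ hμν D Φ = composite ν μ hμν D' Φ := by
  apply MultilinearMap.ext
  intro x
  rw [composite_apply, composite_apply]
  exact congrArg Φ (funext fun L => by rw [h L.1 L.2])

end Composite

/-- A linear map as a multilinear map over the indiscrete partition. -/
def oneVarML {I : Finset (Fin k)} (hI : I.Nonempty) (φ : E'.ax I →ₗ[ℝ] E.ax I) :
    MultilinearMap ℝ (fun P : (indisc (k := k) hI).parts => E'.ax P.1) (E.ax I) where
  toFun x := φ (x (i0 hI))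
  map_update_add' := by
    intro inst x i a b
    haveI := indisc_subsingleton (k := k) hI
    have hi : i = i0 hI := Subsingleton.elim _ _
    subst hi
    rw [Function.update_self, Function.update_self, Function.update_self]
    exact φ.map_add a b
  map_update_smul' := by
    intro inst x i r a
    haveI := indisc_subsingleton (k := k) hI
    have hi : i = i0 hI := Subsingleton.elim _ _
    subst hi
    rw [Function.update_self, Function.update_self]
    exact φ.map_smul r a

theorem oneVarML_carg {I : Finset (Fin k)} (hI : I.Nonempty) (φ : E'.ax I →ₗ[ℝ] E.ax I)
    (w : E'.Total) : oneVarML hI φ (carg w (indisc hI)) = φ (w ⟨I, hI⟩) := rfl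

/-- Transport of a multilinear map along an equality of partitions. -/
def mlCongr {I : Finset (Fin k)} {μ μ' : Finpartition I} (h : μ = μ')
    (m : MultilinearMap ℝ (fun P : μ.parts => E'.ax P.1) (E.ax I)) :
    MultilinearMap ℝ (fun P : μ'.parts => E'.ax P.1) (E.ax I) := h ▸ m

theorem mlCongr_carg {I : Finset (Fin k)} {μ μ' : Finpartition I} (h : μ = μ')
    (m : MultilinearMap ℝ (fun P : μ.parts => E'.ax P.1) (E.ax I)) (w : E'.Total) :
    mlCongr h m (carg w μ') = m (carg w μ) := by subst h; rfl

section Construction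

variable (f : CubeHom E E') (hbij : ∀ (I : Finset (Fin k)) (hI : I.Nonempty),
  Function.Bijective (f.oneBlock I hI))

open scoped Classical in
/-- The components of the inverse cube morphism, with a fuel parameter. -/
noncomputable def Gaux : ℕ → ∀ (I : Finset (Fin k)) (μ : Finpartition I),
    MultilinearMap ℝ (fun P : μ.parts => E'.ax P.1) (E.ax I)
  | 0 => fun _ _ => 0
  | n + 1 => fun I μ =>
    if hI : I.Nonempty then
      if hμ : μ = indisc hI then
        mlCongr hμ.symm (oneVarML hI (finv f hbij I hI))
      else
        - ∑ ν : Finpartition I, (if h : μ ≤ ν ∧ ν ≠ indisc hI then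
            (finv f hbij I hI).compMultilinearMap
              (composite ν μ h.1 (fun L _ μ' => Gaux n L μ') (f.comp I ν))
          else 0)
    else 0

open scoped Classical in
theorem Gaux_succ_def (n : ℕ) (I : Finset (Fin k)) (μ : Finpartition I) :
    Gaux f hbij (n + 1) I μ =
      (if hI : I.Nonempty then
        if hμ : μ = indisc hI then
          mlCongr hμ.symm (oneVarML hI (finv f hbij I hI))
        else
          - ∑ ν : Finpartition I, (if h : μ ≤ ν ∧ ν ≠ indisc hI then
              (finv f hbij I hI).compMultilinearMap
                (composite ν μ h.1 (fun L _ μ' => Gaux f hbij n L μ') (f.comp I ν))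
            else 0)
      else 0) := rfl

theorem Gaux_stab : ∀ (n : ℕ) (I : Finset (Fin k)) (μ : Finpartition I), I.card ≤ n →
    Gaux f hbij (n + 1) I μ = Gaux f hbij n I μ
  | 0, I, μ, h => by
    have hI : ¬ I.Nonempty := by
      rw [Finset.nonempty_iff_ne_empty]
      simp [Finset.card_eq_zero.mp (Nat.le_zero.mp h)]
    simp only [Gaux, dif_neg hI]
  | n + 1, I, μ, h => by
    by_cases hI : I.Nonempty
    · by_cases hμ : μ = indisc hI
      · simp only [Gaux, dif_pos hI, dif_pos hμ]
      · simp only [Gaux, dif_pos hI, dif_neg hμ]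
        congr 1
        apply Finset.sum_congr rfl
        intro ν _
        by_cases hν : μ ≤ ν ∧ ν ≠ indisc hI
        · rw [dif_pos hν, dif_pos hν]
          congr 1
          apply composite_congr
          intro L hL μ'
          have hLn : L.card ≤ n := by
            have := Finset.card_lt_card (part_ssubset hI hν.2 hL)
            omega
          exact Gaux_stab n L μ' hLn
        · rw [dif_neg hν, dif_neg hν]
    · simp only [Gaux, dif_neg hI]

theorem Gaux_add (I : Finset (Fin k)) (μ : Finpartition I) (d : ℕ) :
    ∀ m, I.card ≤ m → Gaux f hbij (m + d) I μ = Gaux f hbij m I μ := by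
  induction d with
  | zero => intro m _; rfl
  | succ d ih =>
    intro m hm
    have h1 : m + (d + 1) = (m + d) + 1 := rfl
    rw [h1, Gaux_stab f hbij (m + d) I μ (le_trans hm (Nat.le_add_right m d)), ih m hm]

theorem Gaux_eq_of_le (I : Finset (Fin k)) (μ : Finpartition I) {m n : ℕ}
    (hm : I.card ≤ m) (hn : I.card ≤ n) :
    Gaux f hbij m I μ = Gaux f hbij n I μ := by
  rcases le_total m n with h | h
  · obtain ⟨d, rfl⟩ := Nat.exists_eq_add_of_le h
    rw [Gaux_add f hbij I μ d m hm]
  · obtain ⟨d, rfl⟩ := Nat.exists_eq_add_of_le h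
    rw [Gaux_add f hbij I μ d n hn]

/-- The candidate inverse cube morphism. -/
noncomputable def gHom : CubeHom E' E := ⟨fun I μ => Gaux f hbij k I μ⟩

end Construction

section Main

open scoped Classical

variable (f : CubeHom E E') (hbij : ∀ (I : Finset (Fin k)) (hI : I.Nonempty),
  Function.Bijective (f.oneBlock I hI))

theorem sum_split {M : Type} [AddCommMonoid M] {I : Finset (Fin k)} (hI : I.Nonempty)
    (F : Finpartition I → M) :
    ∑ ν : Finpartition I, F ν
      = F (indisc hI) + ∑ ν : Finpartition I, (if ν = indisc hI then 0 else F ν) := by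
  have h : ∀ ν : Finpartition I, F ν
      = (if ν = indisc hI then F ν else 0) + (if ν = indisc hI then 0 else F ν) := by
    intro ν; by_cases hν : ν = indisc hI <;> simp [hν]
  rw [Finset.sum_congr rfl (fun ν _ => h ν), Finset.sum_add_distrib]
  congr 1
  exact Fintype.sum_ite_eq' (indisc hI) F

/-- Total version of `restr`. -/
noncomputable def restrD {I : Finset (Fin k)} (μ ν : Finpartition I) (L : ν.parts) :
    Finpartition L.1 :=
  if h : μ ≤ ν then restr μ ν h L.2 else ⊥

/-- One term of the double sum in the inversion formula. -/
noncomputable def Tterm (w : E'.Total) (I : Finset (Fin k)) (hI : I.Nonempty)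
    (μ ν : Finpartition I) : E.ax I :=
  if h : μ ≤ ν ∧ ν ≠ indisc hI then
    finv f hbij I hI (f.comp I ν (fun L => Gaux f hbij k L.1 (restr μ ν h.1 L.2)
      (carg w (restr μ ν h.1 L.2))))
  else 0

theorem Tterm_ind_left (w : E'.Total) (I : Finset (Fin k)) (hI : I.Nonempty)
    (ν : Finpartition I) : Tterm f hbij w I hI (indisc hI) ν = 0 := by
  rw [Tterm, dif_neg]
  rintro ⟨h1, h2⟩
  exact h2 (indisc_le hI h1)

theorem Tterm_ind_right (w : E'.Total) (I : Finset (Fin k)) (hI : I.Nonempty)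
    (μ : Finpartition I) : Tterm f hbij w I hI μ (indisc hI) = 0 := by
  rw [Tterm, dif_neg]
  rintro ⟨_, h2⟩
  exact h2 rfl

theorem claimC (w : E'.Total) (I : Finset (Fin k)) (hI : I.Nonempty) (ν : Finpartition I) :
    ∑ μ : Finpartition I, Tterm f hbij w I hI μ ν
      = if ν = indisc hI then 0
        else finv f hbij I hI (f.comp I ν (carg ((gHom f hbij).toFun w) ν)) := by
  by_cases hν : ν = indisc hI
  · rw [if_pos hν, hν]
    exact Finset.sum_eq_zero fun μ _ => Tterm_ind_right f hbij w I hI μ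
  · rw [if_neg hν]
    have hR : carg ((gHom f hbij).toFun w) ν
        = fun L : ν.parts => ∑ μL : Finpartition L.1, Gaux f hbij k L.1 μL (carg w μL) := rfl
    rw [hR, MultilinearMap.map_sum, map_sum]
    rw [← Finset.sum_filter_of_ne (p := fun μ : Finpartition I => μ ≤ ν)
      (fun μ _ hT => by
        by_contra hle
        exact hT (dif_neg (fun hh => hle hh.1)))]
    refine Finset.sum_nbij' (fun μ => fun L : ν.parts => restrD μ ν L)
      (fun r => ν.bind (fun A hA => r ⟨A, hA⟩)) ?_ ?_ ?_ ?_ ?_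
    · intro μ _
      exact Finset.mem_univ _
    · intro r _
      exact Finset.mem_filter.mpr ⟨Finset.mem_univ _, bind_le ν _⟩
    · intro μ hμ
      have hle : μ ≤ ν := (Finset.mem_filter.mp hμ).2
      have he : (fun A (hA : A ∈ ν.parts) => restrD μ ν ⟨A, hA⟩) = fun A (hA : A ∈ ν.parts) =>
          restr μ ν hle hA := by
        funext A hA
        unfold restrD
        rw [dif_pos hle]
      show ν.bind (fun A hA => restrD μ ν ⟨A, hA⟩) = μ
      rw [he, bind_restr]
    · intro r _
      show (fun L : ν.parts => restrD (ν.bind fun A hA => r ⟨A, hA⟩) ν L) = r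
      funext L
      unfold restrD
      rw [dif_pos (bind_le ν _)]
      exact restr_bind ν _ _ L.2
    · intro μ hμ
      have hle : μ ≤ ν := (Finset.mem_filter.mp hμ).2
      have hcond : μ ≤ ν ∧ ν ≠ indisc hI := ⟨hle, hν⟩
      rw [Tterm, dif_pos hcond]
      congr 1
      refine congrArg _ (funext fun L => ?_)
      show _ = Gaux f hbij k L.1 (restrD μ ν L) (carg w (restrD μ ν L))
      unfold restrD
      rw [dif_pos hle]

theorem gB (w : E'.Total) (I : Finset (Fin k)) (hI : I.Nonempty) :
    (gHom f hbij).toFun w ⟨I, hI⟩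
      = finv f hbij I hI (w ⟨I, hI⟩ - ∑ ν : Finpartition I,
          (if ν = indisc hI then 0
            else f.comp I ν (carg ((gHom f hbij).toFun w) ν))) := by
  have hIk : I.card ≤ k := le_trans (Finset.card_le_univ I) (by simp)
  obtain ⟨c, hc⟩ : ∃ c, I.card = c + 1 := ⟨I.card - 1, by have := hI.card_pos; omega⟩
  have hck : c + 1 ≤ k := hc ▸ hIk
  rw [toFun_eq]
  have step1 : ∀ μ : Finpartition I,
      (gHom f hbij).comp I μ = Gaux f hbij (c + 1) I μ := fun μ =>
    Gaux_eq_of_le f hbij I μ hIk (le_of_eq hc)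
  rw [Finset.sum_congr rfl (fun μ _ => by rw [step1 μ])]
  rw [sum_split hI (fun μ => Gaux f hbij (c + 1) I μ (carg w μ))]
  have e1 : Gaux f hbij (c + 1) I (indisc hI)
      = mlCongr (Eq.symm (rfl : indisc hI = indisc hI))
          (oneVarML hI (finv f hbij I hI)) := by
    rw [Gaux_succ_def, dif_pos hI, dif_pos (rfl : indisc hI = indisc hI)]
  have t1 : Gaux f hbij (c + 1) I (indisc hI) (carg w (indisc hI))
      = finv f hbij I hI (w ⟨I, hI⟩) := by
    rw [e1, mlCongr_carg, oneVarML_carg]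
  have t2 : ∀ μ : Finpartition I,
      (if μ = indisc hI then 0 else Gaux f hbij (c + 1) I μ (carg w μ))
        = - ∑ ν : Finpartition I, Tterm f hbij w I hI μ ν := by
    intro μ
    by_cases hμ : μ = indisc hI
    · rw [if_pos hμ, hμ]
      rw [Finset.sum_congr rfl (fun ν _ => Tterm_ind_left f hbij w I hI ν)]
      simp
    · rw [if_neg hμ]
      simp only [Gaux, dif_pos hI, dif_neg hμ]
      rw [MultilinearMap.neg_apply, MultilinearMap.sum_apply]
      congr 1
      apply Finset.sum_congr rfl
      intro ν _
      by_cases h : μ ≤ ν ∧ ν ≠ indisc hI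
      · rw [dif_pos h, LinearMap.compMultilinearMap_apply, Tterm, dif_pos h]
        congr 1
        rw [composite_apply]
        refine congrArg _ (funext fun L => ?_)
        have hLc : L.1.card ≤ c := by
          have := Finset.card_lt_card (part_ssubset hI h.2 L.2)
          omega
        have hLk : L.1.card ≤ k := le_trans (Finset.card_le_univ L.1) (by simp)
        rw [Gaux_eq_of_le f hbij L.1 (restr μ ν h.1 L.2) hLc hLk]
        rfl
      · rw [dif_neg h, Tterm, dif_neg h]
        rfl
  rw [Finset.sum_congr rfl (fun μ _ => t2 μ), t1]
  rw [Finset.sum_neg_distrib, Finset.sum_comm]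
  rw [Finset.sum_congr rfl (fun ν _ => claimC f hbij w I hI ν)]
  have t3 : ∀ ν : Finpartition I,
      (if ν = indisc hI then 0
        else finv f hbij I hI (f.comp I ν (carg ((gHom f hbij).toFun w) ν)))
      = finv f hbij I hI (if ν = indisc hI then 0
          else f.comp I ν (carg ((gHom f hbij).toFun w) ν)) := by
    intro ν
    rw [apply_ite (finv f hbij I hI), map_zero]
  rw [Finset.sum_congr rfl (fun ν _ => t3 ν), ← map_sum, ← sub_eq_add_neg, ← map_sub]

theorem fg (w : E'.Total) : f.toFun ((gHom f hbij).toFun w) = w := by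
  funext J
  rcases J with ⟨I, hI⟩
  rw [toFun_eq]
  rw [sum_split hI (fun ν => f.comp I ν (carg ((gHom f hbij).toFun w) ν))]
  rw [comp_indisc f hI, gB f hbij w I hI, oneBlock_finv f hbij]
  exact sub_add_cancel _ _

include hbij in
theorem f_inj (v v' : E.Total) (hv : f.toFun v = f.toFun v') : v = v' := by
  have key : ∀ (n : ℕ) (I : Finset (Fin k)) (hI : I.Nonempty), I.card ≤ n →
      v ⟨I, hI⟩ = v' ⟨I, hI⟩ := by
    intro n
    induction n with
    | zero =>
      intro I hI h
      have := hI.card_pos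
      omega
    | succ n ih =>
      intro I hI hc
      have h1 := congrFun hv ⟨I, hI⟩
      rw [toFun_eq, toFun_eq, sum_split hI (fun ν => f.comp I ν (carg v ν)),
        sum_split hI (fun ν => f.comp I ν (carg v' ν)),
        comp_indisc f hI, comp_indisc f hI] at h1
      have h2 : ∀ ν : Finpartition I,
          (if ν = indisc hI then 0 else f.comp I ν (carg v ν))
            = (if ν = indisc hI then 0 else f.comp I ν (carg v' ν)) := by
        intro ν
        by_cases hν : ν = indisc hI
        · rw [if_pos hν, if_pos hν]
        · rw [if_neg hν, if_neg hν]
          refine congrArg _ (funext fun L => ?_)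
          have hLn : L.1.card ≤ n := by
            have := Finset.card_lt_card (part_ssubset hI hν L.2)
            omega
          exact ih L.1 (ν.block_nonempty L.2) hLn
      rw [Finset.sum_congr rfl (fun ν _ => h2 ν)] at h1
      exact (hbij I hI).1 (add_right_cancel h1)
  funext J
  rcases J with ⟨I, hI⟩
  exact key I.card I hI le_rfl

end Main

end Stmt9Aux

/-- A morphism `f : E → E'` of `k`-dimensional cubes, given by component
maps `f^ν` for partitions `ν` of subsets `I ⊆ {1,…,k}`, is invertible (with inverse
again a morphism of `k`-dimensional cubes) if and only if `f^{{I}} : E_I → E'_I` is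
bijective for every nonempty `I ⊆ {1,…,k}`, i.e. for all partitions of length one. -/


theorem stmt_9 {k : ℕ} {E E' : Cube k} (f : CubeHom E E') :
    (∃ g : CubeHom E' E,
      Function.LeftInverse g.toFun f.toFun ∧ Function.RightInverse g.toFun f.toFun) ↔
    (∀ (I : Finset (Fin k)) (hI : I.Nonempty), Function.Bijective (f.oneBlock I hI)) := by
  constructor
  · rintro ⟨g, hgf, hfg⟩ I hI
    constructor
    · have h1 : ∀ x : E.ax I, g.oneBlock I hI (f.oneBlock I hI x) = x := by
        intro x
        have h := hgf (delta hI x)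
        rw [toFun_delta f hI, toFun_delta g hI] at h
        have h' := congrFun h ⟨I, hI⟩
        rwa [delta_same, delta_same] at h'
      exact Function.LeftInverse.injective h1
    · intro y
      have h2 := hfg (delta hI y)
      rw [toFun_delta g hI, toFun_delta f hI] at h2
      have h' := congrFun h2 ⟨I, hI⟩
      rw [delta_same, delta_same] at h'
      exact ⟨g.oneBlock I hI y, h'⟩
  · intro hbij
    refine ⟨gHom f hbij, ?_, fg f hbij⟩
    intro v
    apply f_inj f hbij
    exact fg f hbij (f.toFun v)
end

section
/- Let f : U → F̄ be a natural transformation (U an open subfunctor of Ē) with each f_Λ smooth. If x ∈ U_ℝ and y_i ∈ λ_{I_i} E_{|I_i| mod 2} ⊆ Ē_{Λ_m} for nonempty subsets I₁,…,Iₙ ⊆ {1,…,m}, then dⁿf_{Λ_m}(x)(y₁,…,yₙ) lies in λ_{I₁}⋯λ_{Iₙ} F_{ℓ mod 2} where ℓ = |I₁ ∪ ⋯ ∪ Iₙ|; moreover, if the sets I₁,…,Iₙ are not pairwise disjoint then dⁿf_{Λ_m}(x)(y₁,…,yₙ) = 0. -/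
open Filter Topology Finset

/-- `y = dᵐf(x)(v₁,…,v_m)`, the iterated directional derivative within `U`. -/
def IsIterDerivOn {X Y : Type} [AddCommGroup X] [Module ℝ X] [TopologicalSpace X]
    [AddCommGroup Y] [Module ℝ Y] [TopologicalSpace Y]
    (U : Set X) (f : X → Y) : (m : ℕ) → X → (Fin m → X) → Y → Prop
  | 0, x, _v, y => y = f x
  | m+1, x, v, y => ∃ ψ : X → Y,
      (∀ z ∈ U, IsIterDerivOn U f m z (Fin.tail v) (ψ z)) ∧
      IsDirDerivOn U ψ x (v 0) y

variable {m : ℕ}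

/-- The coordinate model of `Ē_{Λ_m}`: families `(x_I)_{I ⊆ {1,…,m}}` with
`x_I ∈ E_{|I| mod 2}` (the coefficient of the monomial `λ_I`). -/
abbrev GrCoeff (E : Bool → Type) [∀ b, AddCommGroup (E b)] [∀ b, Module ℝ (E b)]
    (m : ℕ) : Type :=
  ∀ I : Finset (Fin m), E (Nat.bodd I.card)

/-- The body (the `λ_∅`-coefficient) of an element of `Ē_{Λ_m}`. -/
noncomputable def body {E : Bool → Type} [∀ b, AddCommGroup (E b)] [∀ b, Module ℝ (E b)]
    (x : GrCoeff E m) : E false :=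
  cast (congrArg E (by simp : Nat.bodd (∅ : Finset (Fin m)).card = false)) (x ∅)

/-- The action on `Ē_{Λ_m}` of the diagonal even algebra endomorphism of `Λ_m`
determined by `λ_i ↦ c_i λ_i`. -/
def grScale {E : Bool → Type} [∀ b, AddCommGroup (E b)] [∀ b, Module ℝ (E b)]
    (c : Fin m → ℝ) (x : GrCoeff E m) : GrCoeff E m :=
  fun I => (∏ i ∈ I, c i) • x I

section Aux
variable {X Y : Type} [AddCommGroup X] [Module ℝ X] [TopologicalSpace X]
  [AddCommGroup Y] [Module ℝ Y] [TopologicalSpace Y]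

lemma neBot_aux [IsTopologicalAddGroup X] [ContinuousSMul ℝ X]
    (V : Set X) (hV : IsOpen V) (x v : X) (hx : x ∈ V) :
    (𝓝[{t : ℝ | t ≠ 0 ∧ x + t • v ∈ V}] 0).NeBot := by
  have hcont : Continuous fun t : ℝ => x + t • v :=
    continuous_const.add (continuous_id.smul continuous_const)
  have hW : IsOpen {t : ℝ | x + t • v ∈ V} := hV.preimage hcont
  have h0 : (0:ℝ) ∈ {t : ℝ | x + t • v ∈ V} := by simp [hx]
  have hset : {t : ℝ | t ≠ 0 ∧ x + t • v ∈ V}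
      = {(0:ℝ)}ᶜ ∩ {t : ℝ | x + t • v ∈ V} := by
    ext t; simp [Set.mem_compl_iff]
  rw [hset, nhdsWithin_inter, nhdsWithin_eq_nhds.mpr (hW.mem_nhds h0),
    inf_eq_left.mpr nhdsWithin_le_nhds]
  exact inferInstance

lemma iterDeriv_unique [IsTopologicalAddGroup X] [ContinuousSMul ℝ X] [T2Space Y]
    (V : Set X) (hV : IsOpen V) (f : X → Y) :
    ∀ (N : ℕ) (x : X), x ∈ V → ∀ (y : Fin N → X) (w w' : Y),
      IsIterDerivOn V f N x y w → IsIterDerivOn V f N x y w' → w = w' := by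
  intro N
  induction N with
  | zero => intro x _ y w w' h h'; exact h.trans h'.symm
  | succ N ih =>
    rintro x hx y w w' ⟨ψ, hψ, hd⟩ ⟨ψ', hψ', hd'⟩
    haveI := neBot_aux V hV x (y 0) hx
    refine tendsto_nhds_unique_of_eventuallyEq hd hd' ?_
    filter_upwards [eventually_mem_nhdsWithin] with t ht
    have h1 : ψ (x + t • y 0) = ψ' (x + t • y 0) :=
      ih _ ht.2 _ _ _ (hψ _ ht.2) (hψ' _ ht.2)
    have h2 : ψ x = ψ' x := ih x hx _ _ _ (hψ _ hx) (hψ' _ hx)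
    rw [h1, h2]

lemma iterDeriv_equivar [IsTopologicalAddGroup X] [ContinuousSMul ℝ X]
    [IsTopologicalAddGroup Y] [ContinuousSMul ℝ Y]
    (V : Set X) (f : X → Y) (φ : X →L[ℝ] X) (φinv : X → X)
    (hinv : ∀ z, φinv (φ z) = z) (hinv2 : ∀ z, φ (φinv z) = z)
    (hφV : ∀ z, φ z ∈ V ↔ z ∈ V)
    (T : Y →L[ℝ] Y) (hcomm : ∀ z ∈ V, f (φ z) = T (f z)) :
    ∀ (N : ℕ) (x : X), x ∈ V → ∀ (y : Fin N → X) (μ : Fin N → ℝ), (∀ i, μ i ≠ 0) →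
      ∀ w : Y, IsIterDerivOn V f N x y w →
      IsIterDerivOn V f N (φ x) (fun i => μ i • φ (y i)) ((∏ i, μ i) • T w) := by
  intro N
  induction N with
  | zero =>
    intro x hx y μ _ w hw
    show ((∏ i : Fin 0, μ i) • T w) = f (φ x)
    rw [hw, Finset.univ_eq_empty, Finset.prod_empty, one_smul, hcomm x hx]
  | succ N ih =>
    rintro x hx y μ hμ w ⟨ψ, hψ, hd⟩
    have hinvV : ∀ z ∈ V, φinv z ∈ V := by
      intro z hz
      have := hφV (φinv z)
      rw [hinv2 z] at this
      exact this.mp hz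
    refine ⟨fun z => (∏ i : Fin N, μ i.succ) • T (ψ (φinv z)), ?_, ?_⟩
    · intro z hz
      have h := ih (φinv z) (hinvV z hz) (Fin.tail y) (Fin.tail μ)
        (fun i : Fin N => hμ i.succ) (ψ (φinv z)) (hψ _ (hinvV z hz))
      rw [hinv2 z] at h
      exact h
    · show Tendsto _ (𝓝[{t : ℝ | t ≠ 0 ∧ φ x + t • (μ 0 • φ (y 0)) ∈ V}] 0) _
      have hφpt : ∀ t : ℝ, φ x + t • (μ 0 • φ (y 0)) = φ (x + (μ 0 * t) • y 0) := by
        intro t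
        rw [map_add, map_smul, smul_smul, mul_comm]
      have hS : {t : ℝ | t ≠ 0 ∧ φ x + t • (μ 0 • φ (y 0)) ∈ V}
          ⊆ (fun t : ℝ => μ 0 * t) ⁻¹' {s : ℝ | s ≠ 0 ∧ x + s • y 0 ∈ V} := by
        rintro t ⟨ht0, htV⟩
        refine ⟨mul_ne_zero (hμ 0) ht0, ?_⟩
        rw [hφpt t, hφV] at htV
        exact htV
      have hmap : Tendsto (fun t : ℝ => μ 0 * t)
          (𝓝[{t : ℝ | t ≠ 0 ∧ φ x + t • (μ 0 • φ (y 0)) ∈ V}] 0)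
          (𝓝[{s : ℝ | s ≠ 0 ∧ x + s • y 0 ∈ V}] 0) := by
        apply tendsto_nhdsWithin_of_tendsto_nhds_of_eventually_within
        · have : Tendsto (fun t : ℝ => μ 0 * t) (𝓝 0) (𝓝 (μ 0 * 0)) :=
            (continuous_const.mul continuous_id).tendsto 0
          rw [mul_zero] at this
          exact this.mono_left nhdsWithin_le_nhds
        · filter_upwards [eventually_mem_nhdsWithin] with t ht using hS ht
      have h1 := hd.comp hmap
      have h2 := (T.continuous.tendsto w).comp h1
      have h3 := h2.const_smul (μ 0 * ∏ i : Fin N, μ i.succ)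
      have hval : (μ 0 * ∏ i : Fin N, μ i.succ) • T w = (∏ i, μ i) • T w := by
        rw [Fin.prod_univ_succ]
      rw [hval] at h3
      refine h3.congr fun t => ?_
      show (μ 0 * ∏ i : Fin N, μ i.succ) • T ((μ 0 * t)⁻¹ • (ψ (x + (μ 0 * t) • y 0) - ψ x)) = _
      have hinvt : μ 0 * (μ 0 * t)⁻¹ = t⁻¹ := by
        rw [mul_inv, ← mul_assoc, mul_inv_cancel₀ (hμ 0), one_mul]
      dsimp only
      rw [hinv, map_smul, map_sub, smul_smul, smul_smul]
      rw [show φ x + (t * μ 0) • φ (y 0) = φ (x + (t * μ 0) • y 0) by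
        rw [map_add, map_smul], hinv]
      simp [smul_smul, mul_comm]
      rw [← smul_sub, smul_smul]
      congr 1
      rw [mul_assoc, inv_mul_cancel_left₀ (hμ 0)]

end Aux

noncomputable def grScaleL {m : ℕ} {G : Bool → Type} [∀ b, AddCommGroup (G b)] [∀ b, Module ℝ (G b)]
    [∀ b, TopologicalSpace (G b)] [∀ b, ContinuousSMul ℝ (G b)] (c : Fin m → ℝ) :
    GrCoeff G m →L[ℝ] GrCoeff G m where
  toFun := grScale c
  map_add' a b := funext fun _ => smul_add _ _ _
  map_smul' t a := funext fun _ => smul_comm _ _ _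
  cont := continuous_pi fun I => (continuous_apply I).const_smul _

/-- Let `f : U → F̄` be a natural transformation (`U` an open
subfunctor of `Ē`) with each `f_Λ` smooth (Michal–Bastiani).  If `x ∈ U_ℝ` and
`y_i ∈ λ_{I_i} E_{|I_i| mod 2} ⊆ Ē_{Λ_m}` for nonempty `I₁,…,Iₙ ⊆ {1,…,m}`, then
`dⁿf_{Λ_m}(x)(y₁,…,yₙ)` lies in `λ_{I₁}⋯λ_{Iₙ} F_{ℓ mod 2}` where
`ℓ = |I₁ ∪ ⋯ ∪ Iₙ|` (i.e. it is supported on the single coordinate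
`I₁ ∪ ⋯ ∪ Iₙ`); moreover if the `I_i` are not pairwise disjoint then
`dⁿf_{Λ_m}(x)(y₁,…,yₙ) = 0`.  (Naturality is expressed through equivariance
under the diagonal even algebra endomorphisms `λ_i ↦ c_i λ_i` of `Λ_m`, which
are the morphisms used in the proof.) -/
theorem stmt_14 {E F : Bool → Type}
    [∀ b, AddCommGroup (E b)] [∀ b, Module ℝ (E b)] [∀ b, TopologicalSpace (E b)]
    [∀ b, IsTopologicalAddGroup (E b)] [∀ b, ContinuousSMul ℝ (E b)]
    [∀ b, T2Space (E b)] [∀ b, LocallyConvexSpace ℝ (E b)]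
    [∀ b, AddCommGroup (F b)] [∀ b, Module ℝ (F b)] [∀ b, TopologicalSpace (F b)]
    [∀ b, IsTopologicalAddGroup (F b)] [∀ b, ContinuousSMul ℝ (F b)]
    [∀ b, T2Space (F b)] [∀ b, LocallyConvexSpace ℝ (F b)]
    (U : Set (E false)) (hU : IsOpen U)
    (f : GrCoeff E m → GrCoeff F m)
    (hsmooth : IsSmoothOn (GrCoeff F m) (TVS.ofType (GrCoeff E m)) f
      {z : GrCoeff E m | body z ∈ U})
    (hnat : ∀ (c : Fin m → ℝ), ∀ z ∈ {z : GrCoeff E m | body z ∈ U},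
      f (grScale c z) = grScale c (f z))
    -- a real point `x ∈ U_ℝ`:
    (x : GrCoeff E m) (hx₀ : ∀ I : Finset (Fin m), I ≠ ∅ → x I = 0) (hx : body x ∈ U)
    -- the arguments `y_i ∈ λ_{I_i} E_{|I_i| mod 2}`:
    (N : ℕ) (I : Fin N → Finset (Fin m)) (hIne : ∀ i, (I i).Nonempty)
    (y : Fin N → GrCoeff E m)
    (hy : ∀ (i : Fin N) (K : Finset (Fin m)), K ≠ I i → y i K = 0) :
    ∀ w : GrCoeff F m,
      IsIterDerivOn {z : GrCoeff E m | body z ∈ U} f N x y w →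
      (∀ K : Finset (Fin m), K ≠ Finset.univ.sup I → w K = 0) ∧
      (¬ (∀ i j : Fin N, i ≠ j → Disjoint (I i) (I j)) → w = 0) := by
  intro w hw
  have hVopen : IsOpen {z : GrCoeff E m | body z ∈ U} := by
    have hb : Continuous (fun z : GrCoeff E m => body z) := by
      unfold body
      have hcast : ∀ (b : Bool) (h : b = false) (g : GrCoeff E m → E b), Continuous g →
          Continuous (fun z => cast (congrArg E h) (g z)) := by
        rintro b rfl g hg; exact hg
      exact hcast _ (by simp) _ (continuous_apply _)
    exact hU.preimage hb
  have key : ∀ c : Fin m → ℝ, (∀ j, c j ≠ 0) →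
      w = (∏ i, (∏ j ∈ I i, c j)⁻¹) • grScale (E := F) c w := by
    intro c hc
    have hcprod : ∀ s : Finset (Fin m), (∏ j ∈ s, c j) ≠ 0 :=
      fun s => Finset.prod_ne_zero_iff.mpr fun j _ => hc j
    have hinv : ∀ z : GrCoeff E m,
        grScale (fun j => (c j)⁻¹) (grScaleL (G := E) c z) = z := by
      intro z; funext K
      show (∏ j ∈ K, (c j)⁻¹) • (∏ j ∈ K, c j) • z K = z K
      rw [smul_smul, Finset.prod_inv_distrib, inv_mul_cancel₀ (hcprod K), one_smul]
    have hinv2 : ∀ z : GrCoeff E m,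
        grScaleL (G := E) c (grScale (fun j => (c j)⁻¹) z) = z := by
      intro z; funext K
      show (∏ j ∈ K, c j) • (∏ j ∈ K, (c j)⁻¹) • z K = z K
      rw [smul_smul, Finset.prod_inv_distrib, mul_inv_cancel₀ (hcprod K), one_smul]
    have hbodyE : ∀ z : GrCoeff E m, body (grScaleL (G := E) c z) = body z := fun z => by
      unfold body
      congr 1
      show (∏ j ∈ (∅ : Finset (Fin m)), c j) • z ∅ = z ∅
      rw [Finset.prod_empty, one_smul]
    have hφV : ∀ z : GrCoeff E m, grScaleL (G := E) c z ∈ {z : GrCoeff E m | body z ∈ U}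
        ↔ z ∈ {z : GrCoeff E m | body z ∈ U} := fun z => by
      simp only [Set.mem_setOf_eq, hbodyE z]
    have hcomm : ∀ z ∈ {z : GrCoeff E m | body z ∈ U},
        f (grScaleL (G := E) c z) = grScaleL (G := F) c (f z) := fun z hz => hnat c z hz
    have hμ : ∀ i, (fun i => (∏ j ∈ I i, c j)⁻¹) i ≠ 0 := fun i => inv_ne_zero (hcprod (I i))
    have h2 := iterDeriv_equivar _ f (grScaleL (G := E) c) (grScale (fun j => (c j)⁻¹))
      hinv hinv2 hφV (grScaleL (G := F) c) hcomm N x hx y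
      (fun i => (∏ j ∈ I i, c j)⁻¹) hμ w hw
    have hφx : grScaleL (G := E) c x = x := by
      funext K
      show (∏ j ∈ K, c j) • x K = x K
      rcases eq_or_ne K ∅ with rfl | hK
      · rw [Finset.prod_empty, one_smul]
      · rw [hx₀ K hK, smul_zero]
    have hφy : (fun i => (∏ j ∈ I i, c j)⁻¹ • grScaleL (G := E) c (y i)) = y := by
      funext i; funext K
      show (∏ j ∈ I i, c j)⁻¹ • (∏ j ∈ K, c j) • y i K = y i K
      rcases eq_or_ne K (I i) with rfl | hK
      · rw [smul_smul, inv_mul_cancel₀ (hcprod _), one_smul]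
      · rw [hy i K hK, smul_zero, smul_zero]
    rw [hφx, hφy] at h2
    exact iterDeriv_unique _ hVopen f N x hx y w _ hw h2
  have keyK : ∀ K : Finset (Fin m), w K ≠ 0 → ∀ j₀ : Fin m,
      (if j₀ ∈ K then (2:ℝ) else 1)
        = 2 ^ (univ.filter (fun i => j₀ ∈ I i)).card := by
    intro K hwK j₀
    set c : Fin m → ℝ := fun j => if j = j₀ then 2 else 1 with hcdef
    have hc : ∀ j, c j ≠ 0 := fun j => by
      simp only [hcdef]; split <;> norm_num
    have hcprod : ∀ s : Finset (Fin m), (∏ j ∈ s, c j) ≠ 0 :=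
      fun s => Finset.prod_ne_zero_iff.mpr fun j _ => hc j
    have h' : ((∏ i, (∏ j ∈ I i, c j)⁻¹) * ∏ j ∈ K, c j) • w K = w K := by
      rw [← smul_smul]; exact (congrFun (key c hc) K).symm
    have hscal : (∏ i, (∏ j ∈ I i, c j)⁻¹) * ∏ j ∈ K, c j = 1 := by
      by_contra hne
      apply hwK
      have h0 : ((∏ i, (∏ j ∈ I i, c j)⁻¹) * ∏ j ∈ K, c j - 1) • w K = 0 := by
        rw [sub_smul, h', one_smul, sub_self]
      rcases smul_eq_zero.mp h0 with h1 | h2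
      · exact absurd (sub_eq_zero.mp h1) hne
      · exact h2
    rw [Finset.prod_inv_distrib] at hscal
    have hKprod : (∏ i, ∏ j ∈ I i, c j) = ∏ j ∈ K, c j :=
      (inv_mul_eq_one₀ (Finset.prod_ne_zero_iff.mpr fun i _ => hcprod (I i))).mp hscal
    have hKc : ∏ j ∈ K, c j = if j₀ ∈ K then (2:ℝ) else 1 := by
      simp only [hcdef]; exact Finset.prod_ite_eq' K j₀ (fun _ => (2:ℝ))
    have hIc : ∀ i, ∏ j ∈ I i, c j = if j₀ ∈ I i then (2:ℝ) else 1 := fun i => by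
      simp only [hcdef]; exact Finset.prod_ite_eq' (I i) j₀ (fun _ => (2:ℝ))
    have hprodI : (∏ i, ∏ j ∈ I i, c j)
        = 2 ^ (univ.filter (fun i => j₀ ∈ I i)).card := by
      simp only [hIc]
      rw [Finset.prod_ite, Finset.prod_const, Finset.prod_const_one, mul_one]
    rw [← hKc, ← hKprod, hprodI]
  refine ⟨?_, ?_⟩
  · intro K hK
    by_contra hwK
    apply hK
    apply Finset.ext
    intro j₀
    have e := keyK K hwK j₀
    constructor
    · intro hjK
      rw [if_pos hjK] at e
      have e2 : (2:ℕ) = 2 ^ (univ.filter (fun i => j₀ ∈ I i)).card := by exact_mod_cast e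
      have hd1 : (univ.filter (fun i => j₀ ∈ I i)).card = 1 := by
        apply Nat.pow_right_injective (le_refl 2)
        show 2 ^ _ = 2 ^ 1
        rw [pow_one]; exact e2.symm
      have hpos : 0 < (univ.filter (fun i => j₀ ∈ I i)).card := by omega
      obtain ⟨i, hi⟩ := Finset.card_pos.mp hpos
      exact Finset.mem_sup.mpr ⟨i, Finset.mem_univ i, (Finset.mem_filter.mp hi).2⟩
    · intro hjsup
      obtain ⟨i, _, hij⟩ := Finset.mem_sup.mp hjsup
      by_contra hjK
      rw [if_neg hjK] at e
      have e2 : (1:ℕ) = 2 ^ (univ.filter (fun i => j₀ ∈ I i)).card := by exact_mod_cast e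
      have hpos : 0 < (univ.filter (fun i => j₀ ∈ I i)).card :=
        Finset.card_pos.mpr ⟨i, Finset.mem_filter.mpr ⟨Finset.mem_univ i, hij⟩⟩
      have : 2 ^ 1 ≤ 2 ^ (univ.filter (fun i => j₀ ∈ I i)).card :=
        Nat.pow_le_pow_right (by norm_num) hpos
      omega
  · intro hnd
    push_neg at hnd
    obtain ⟨i₁, i₂, hne, hnd'⟩ := hnd
    obtain ⟨j₀, hj₁, hj₂⟩ := Finset.not_disjoint_iff.mp hnd'
    funext K
    have hzero : (0 : GrCoeff F m) K = 0 := rfl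
    rw [hzero]
    by_contra hwK
    have e := keyK K hwK j₀
    have hd2 : 2 ≤ (univ.filter (fun i => j₀ ∈ I i)).card :=
      Finset.one_lt_card.mpr ⟨i₁, Finset.mem_filter.mpr ⟨Finset.mem_univ _, hj₁⟩,
        i₂, Finset.mem_filter.mpr ⟨Finset.mem_univ _, hj₂⟩, hne⟩
    have h4 : 2 ^ 2 ≤ 2 ^ (univ.filter (fun i => j₀ ∈ I i)).card :=
      Nat.pow_le_pow_right (by norm_num) hd2
    by_cases hj : j₀ ∈ K
    · rw [if_pos hj] at e
      have e2 : (2:ℕ) = 2 ^ (univ.filter (fun i => j₀ ∈ I i)).card := by exact_mod_cast e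
      omega
    · rw [if_neg hj] at e
      have e2 : (1:ℕ) = 2 ^ (univ.filter (fun i => j₀ ∈ I i)).card := by exact_mod_cast e
      omega
end

section
/- Let (f_r)_r : U → V and (g_r)_r : V → W be skeletons of supersmooth morphisms between superdomains. Suppose f₁(x) : E₁ → F₁ is invertible for every x ∈ U_ℝ and f₀ : U_ℝ → V_ℝ is a diffeomorphism. Define g₀ := f₀⁻¹, g₁(x') := f₁(g₀(x'))⁻¹, and for n > 1 recursively gₙ(x')(v') := -Σ_{m,l<n, (α,β)∈I^n_{m,l}, σ∈Sₙ} (sgn σ)/(m! l! α! β!) d^m g_l(x')((f_α × f_β)(g₀(x'))(v^σ)) with v_i := g₁(x')(v'_i). Then ((g_r)_r ∘ (f_r)_r) is the identity skeleton (id, c_id, 0, 0, …), i.e. (g_r)_r is a left inverse of (f_r)_r. -/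
open Filter Topology Finset

/-- The components of a skeleton between `ℤ₂`-graded spaces: maps
`f_k : U_ℝ → Altᵏ(E₁; F_{k mod 2})`, in uncurried form. -/
abbrev Skel (E F : Bool → Type) : Type :=
  (k : ℕ) → E false → (Fin k → E true) → F (Nat.bodd k)

/-- `T` is multilinear and alternating in its `k` arguments. -/
def IsMultAlt {V W : Type} [AddCommGroup V] [Module ℝ V] [AddCommGroup W] [Module ℝ W]
    (k : ℕ) (T : (Fin k → V) → W) : Prop :=
  (∀ (v : Fin k → V) (i : Fin k) (a b : V),
    T (Function.update v i (a + b)) = T (Function.update v i a) + T (Function.update v i b)) ∧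
  (∀ (v : Fin k → V) (i : Fin k) (c : ℝ) (a : V),
    T (Function.update v i (c • a)) = c • T (Function.update v i a)) ∧
  (∀ (v : Fin k → V) (i j : Fin k), i ≠ j → v i = v j → T v = 0)

section BigSum

variable {E F G : Bool → Type}
  [∀ b, AddCommGroup (E b)] [∀ b, Module ℝ (E b)]
  [∀ b, AddCommGroup (F b)] [∀ b, Module ℝ (F b)]
  [∀ b, AddCommGroup (G b)] [∀ b, Module ℝ (G b)]

/-- The fundamental sum appearing in the composition formula for skeletons:
`Σ_{m<mB, l<lB; σ ∈ Sₙ; (α,β) ∈ I^n_{m,l}} (sgn σ)/(m! l! α! β!) ·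
  dᵐg_l(y₀)((ev_α × ev_β)(v^σ))`,
where `I^n_{m,l} = {(α,β) ∈ (2ℕ)^m × (2ℕ₀+1)^l : |α|+|β| = n}`,
`Dg l m` plays the role of `dᵐ g_l`, `ev k` plays the role of the skeleton
components `f_k` evaluated at the relevant base point, and the arguments of the
blocks are the consecutive slices of the permuted tuple `v^σ`. -/
noncomputable def bigSum
    (Dg : (l m : ℕ) → F false → (Fin m → F false) → (Fin l → F true) → G (Nat.bodd l))
    (y0 : F false)
    (ev : (k : ℕ) → (Fin k → E true) → F (Nat.bodd k))
    (n mB lB : ℕ) (v : Fin n → E true) : G (Nat.bodd n) :=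
  ∑ m ∈ Finset.range mB, ∑ l ∈ Finset.range lB,
  ∑ σ : Equiv.Perm (Fin n),
  ∑ ab ∈ Finset.HasAntidiagonal.antidiagonal n,
  ∑ α ∈ (Finset.Nat.antidiagonalTuple m ab.1).filter (fun α => ∀ i, Even (α i) ∧ α i ≠ 0),
  ∑ β ∈ (Finset.Nat.antidiagonalTuple l ab.2).filter (fun β => ∀ j, ¬ Even (β j)),
    if hpar : Nat.bodd l = Nat.bodd n then
      ((((Equiv.Perm.sign σ : ℤ) : ℝ)) /
        (((m.factorial * l.factorial * (∏ i, (α i).factorial) * ∏ j, (β j).factorial : ℕ)) : ℝ)) •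
      cast (congrArg G hpar)
        (Dg l m y0
          (fun i => if h : Nat.bodd (α i) = false then
              cast (congrArg F h)
                (ev (α i) (fun t =>
                  if h2 : (∑ i' ∈ Finset.univ.filter (fun i' => i' < i), α i') + (t : ℕ) < n then
                    v (σ ⟨_, h2⟩) else 0))
            else 0)
          (fun j => if h : Nat.bodd (β j) = true then
              cast (congrArg F h)
                (ev (β j) (fun t =>
                  if h2 : ab.1 + (∑ j' ∈ Finset.univ.filter (fun j' => j' < j), β j') + (t : ℕ) < n then
                    v (σ ⟨_, h2⟩) else 0))
            else 0))
    else 0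

end BigSum

section MultAlt

variable {V W : Type} [AddCommGroup V] [Module ℝ V] [AddCommGroup W] [Module ℝ W]

/-- Bundle an `IsMultAlt` predicate into an `AlternatingMap`. -/
noncomputable def IsMultAlt.toAlt {k : ℕ} {T : (Fin k → V) → W} (h : IsMultAlt k T) :
    V [⋀^Fin k]→ₗ[ℝ] W where
  toFun := T
  map_update_add' := by
    intro inst v i a b
    cases Subsingleton.elim inst (instDecidableEqFin k)
    exact h.1 v i a b
  map_update_smul' := by
    intro inst v i c a
    cases Subsingleton.elim inst (instDecidableEqFin k)
    exact h.2.1 v i c a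
  map_eq_zero_of_eq' := fun v i j hv hij => h.2.2 v i j hij hv

theorem IsMultAlt.perm {k : ℕ} {T : (Fin k → V) → W} (h : IsMultAlt k T)
    (v : Fin k → V) (σ : Equiv.Perm (Fin k)) :
    T (fun i => v (σ i)) = ((Equiv.Perm.sign σ : ℤ) : ℝ) • T v := by
  have := h.toAlt.map_perm v σ
  change h.toAlt (v ∘ σ) = ((Equiv.Perm.sign σ : ℤ) : ℝ) • h.toAlt v
  simpa [Units.smul_def, Int.cast_smul_eq_zsmul] using this

end MultAlt

section HelperLemmas

variable {E F G : Bool → Type}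
  [∀ b, AddCommGroup (E b)] [∀ b, Module ℝ (E b)]
  [∀ b, AddCommGroup (F b)] [∀ b, Module ℝ (F b)]
  [∀ b, AddCommGroup (G b)] [∀ b, Module ℝ (G b)]

/-- One `(m, l)` term of `bigSum`. -/
noncomputable def bigTerm
    (Dg : (l m : ℕ) → F false → (Fin m → F false) → (Fin l → F true) → G (Nat.bodd l))
    (y0 : F false)
    (ev : (k : ℕ) → (Fin k → E true) → F (Nat.bodd k))
    (n : ℕ) (v : Fin n → E true) (m l : ℕ) : G (Nat.bodd n) :=
  ∑ σ : Equiv.Perm (Fin n),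
  ∑ ab ∈ Finset.HasAntidiagonal.antidiagonal n,
  ∑ α ∈ (Finset.Nat.antidiagonalTuple m ab.1).filter (fun α => ∀ i, Even (α i) ∧ α i ≠ 0),
  ∑ β ∈ (Finset.Nat.antidiagonalTuple l ab.2).filter (fun β => ∀ j, ¬ Even (β j)),
    if hpar : Nat.bodd l = Nat.bodd n then
      ((((Equiv.Perm.sign σ : ℤ) : ℝ)) /
        (((m.factorial * l.factorial * (∏ i, (α i).factorial) * ∏ j, (β j).factorial : ℕ)) : ℝ)) •
      cast (congrArg G hpar)
        (Dg l m y0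
          (fun i => if h : Nat.bodd (α i) = false then
              cast (congrArg F h)
                (ev (α i) (fun t =>
                  if h2 : (∑ i' ∈ Finset.univ.filter (fun i' => i' < i), α i') + (t : ℕ) < n then
                    v (σ ⟨_, h2⟩) else 0))
            else 0)
          (fun j => if h : Nat.bodd (β j) = true then
              cast (congrArg F h)
                (ev (β j) (fun t =>
                  if h2 : ab.1 + (∑ j' ∈ Finset.univ.filter (fun j' => j' < j), β j') + (t : ℕ) < n then
                    v (σ ⟨_, h2⟩) else 0))
            else 0))
    else 0

theorem bigSum_eq_bigTerm
    (Dg : (l m : ℕ) → F false → (Fin m → F false) → (Fin l → F true) → G (Nat.bodd l))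
    (y0 : F false) (ev : (k : ℕ) → (Fin k → E true) → F (Nat.bodd k))
    (n mB lB : ℕ) (v : Fin n → E true) :
    bigSum Dg y0 ev n mB lB v =
      ∑ m ∈ Finset.range mB, ∑ l ∈ Finset.range lB, bigTerm Dg y0 ev n v m l := rfl

theorem bigTerm_parity
    {Dg : (l m : ℕ) → F false → (Fin m → F false) → (Fin l → F true) → G (Nat.bodd l)}
    {y0 : F false} {ev : (k : ℕ) → (Fin k → E true) → F (Nat.bodd k)}
    {n : ℕ} {v : Fin n → E true} {m l : ℕ} (h : Nat.bodd l ≠ Nat.bodd n) :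
    bigTerm Dg y0 ev n v m l = 0 :=
  Finset.sum_eq_zero fun _ _ => Finset.sum_eq_zero fun _ _ =>
    Finset.sum_eq_zero fun _ _ => Finset.sum_eq_zero fun _ _ => dif_neg h

theorem bigTerm_zero
    {Dg : (l m : ℕ) → F false → (Fin m → F false) → (Fin l → F true) → G (Nat.bodd l)}
    {y0 : F false} {ev : (k : ℕ) → (Fin k → E true) → F (Nat.bodd k)}
    {n : ℕ} {v : Fin n → E true} {m l : ℕ} (h : n < l + 2 * m) :
    bigTerm Dg y0 ev n v m l = 0 := by
  refine Finset.sum_eq_zero fun σ _ => Finset.sum_eq_zero fun ab hab => ?_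
  rw [Finset.HasAntidiagonal.mem_antidiagonal] at hab
  by_cases h1 : ab.1 < 2 * m
  · have hα : (Finset.Nat.antidiagonalTuple m ab.1).filter
        (fun α => ∀ i, Even (α i) ∧ α i ≠ 0) = ∅ := by
      rw [Finset.filter_eq_empty_iff]
      intro α hmem
      rw [Finset.Nat.mem_antidiagonalTuple] at hmem
      intro hc
      have h2m : 2 * m ≤ ∑ i, α i := by
        calc 2 * m = ∑ _i : Fin m, 2 := by simp [mul_comm]
        _ ≤ ∑ i, α i := Finset.sum_le_sum fun i _ => by
            rcases (hc i).1 with ⟨c, hcc⟩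
            have := (hc i).2
            omega
      omega
    rw [hα, Finset.sum_empty]
  · refine Finset.sum_eq_zero fun α _ => ?_
    have hβ : (Finset.Nat.antidiagonalTuple l ab.2).filter (fun β => ∀ j, ¬ Even (β j)) = ∅ := by
      rw [Finset.filter_eq_empty_iff]
      intro β hmem
      rw [Finset.Nat.mem_antidiagonalTuple] at hmem
      intro hc
      have hl : l ≤ ∑ j, β j := by
        calc l = ∑ _j : Fin l, 1 := by simp
        _ ≤ ∑ j, β j := Finset.sum_le_sum fun j _ => by
            have := hc j
            rcases Nat.eq_zero_or_pos (β j) with h0 | h0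
            · exact absurd (h0 ▸ Even.zero) this
            · exact h0
      omega
    rw [hβ, Finset.sum_empty]

theorem beta_filter (n : ℕ) :
    (Finset.Nat.antidiagonalTuple n n).filter (fun β => ∀ j, ¬ Even (β j)) =
      {fun _ => 1} := by
  ext β
  simp only [Finset.mem_filter, Finset.Nat.mem_antidiagonalTuple, Finset.mem_singleton]
  constructor
  · rintro ⟨hsum, hodd⟩
    funext j
    by_contra hj
    have h1 : ∀ i : Fin n, 1 ≤ β i := fun i =>
      Nat.one_le_iff_ne_zero.mpr (fun h0 => hodd i (h0 ▸ Even.zero))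
    have h2 : 2 ≤ β j := by have := h1 j; omega
    have hlt : (n : ℕ) < ∑ i, β i := by
      calc (n : ℕ) = ∑ _i : Fin n, 1 := by simp
      _ < ∑ i, β i := Finset.sum_lt_sum (fun i _ => h1 i) ⟨j, Finset.mem_univ j, by omega⟩
    omega
  · rintro rfl
    exact ⟨by simp, fun j => by simp⟩

end HelperLemmas
section TopTerm
set_option linter.unusedSectionVars false

variable {E F G : Bool → Type}
  [∀ b, AddCommGroup (E b)] [∀ b, Module ℝ (E b)]
  [∀ b, AddCommGroup (F b)] [∀ b, Module ℝ (F b)]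
  [∀ b, AddCommGroup (G b)] [∀ b, Module ℝ (G b)]

theorem filter_lt_card {n : ℕ} (j : Fin n) :
    (Finset.univ.filter (fun j' => j' < j)).card = (j : ℕ) := by
  have : Finset.univ.filter (fun j' => j' < j) = Finset.Iio j := by
    ext j'; simp
  rw [this, Fin.card_Iio]

set_option maxHeartbeats 2000000 in
theorem bigTerm_top
    (Dg : (l m : ℕ) → F false → (Fin m → F false) → (Fin l → F true) → G (Nat.bodd l))
    (y0 : F false) (ev : (k : ℕ) → (Fin k → E true) → F (Nat.bodd k))
    (n : ℕ) (hn : 1 ≤ n) (v : Fin n → E true)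
    (G0 : (Fin n → F true) → G (Nat.bodd n))
    (hD0 : ∀ (w : Fin 0 → F false) (vv : Fin n → F true), Dg n 0 y0 w vv = G0 vv)
    (halt : IsMultAlt n G0)
    (e1 : E true → F true)
    (he1 : ∀ w, e1 w = cast (congrArg F Nat.bodd_one) (ev 1 (fun _ => w))) :
    bigTerm Dg y0 ev n v 0 n = G0 (fun j => e1 (v j)) := by
  have step1 : bigTerm Dg y0 ev n v 0 n =
      ∑ _σ : Equiv.Perm (Fin n), ((n.factorial : ℝ))⁻¹ • G0 (fun j => e1 (v j)) := by
    refine Finset.sum_congr rfl fun σ _ => ?_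
    -- collapse the antidiagonal sum to ab = (0, n)
    rw [Finset.sum_eq_single_of_mem ((0 : ℕ), n) (by simp)]
    swap
    · intro ab hab hne
      rw [Finset.HasAntidiagonal.mem_antidiagonal] at hab
      have h1 : ab.1 ≠ 0 := by
        intro h0
        exact hne (Prod.ext h0 (by omega))
      obtain ⟨k, hk⟩ := Nat.exists_eq_succ_of_ne_zero h1
      rw [hk, Finset.Nat.antidiagonalTuple_zero_succ, Finset.filter_empty, Finset.sum_empty]
    -- ab = (0, n)
    rw [Finset.Nat.antidiagonalTuple_zero_zero, Finset.filter_singleton,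
      if_pos (fun i => i.elim0), Finset.sum_singleton, beta_filter, Finset.sum_singleton,
      dif_pos rfl, cast_eq, hD0]
    have hβarg : (fun j => if h : Nat.bodd ((fun _ : Fin n => 1) j) = true then
        cast (congrArg F h)
          (ev ((fun _ : Fin n => 1) j) (fun t =>
            if h2 : ((0 : ℕ), n).1 + (∑ j' ∈ Finset.univ.filter (fun j' => j' < j),
                (fun _ : Fin n => 1) j') + (t : ℕ) < n then
              v (σ ⟨_, h2⟩) else 0))
      else 0) = fun j => e1 (v (σ j)) := by
      funext j
      rw [dif_pos Nat.bodd_one, he1]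
      congr 1
      congr 1
      funext t
      have ht : (t : ℕ) = 0 := Nat.lt_one_iff.mp t.isLt
      have hsum : (∑ j' ∈ Finset.univ.filter (fun j' => j' < j), (fun _ : Fin n => 1) j')
          = (j : ℕ) := by
        simp only [Finset.sum_const, smul_eq_mul, mul_one]
        exact filter_lt_card j
      have key : ∀ (idx : ℕ), idx = (j : ℕ) →
          (if h2 : idx < n then v (σ ⟨idx, h2⟩) else 0) = v (σ j) := by
        rintro _ rfl
        rw [dif_pos j.isLt]
      exact key _ (by simp [hsum, ht])
      done
    rw [hβarg]
    have hperm : G0 (fun j => e1 (v (σ j))) =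
        ((Equiv.Perm.sign σ : ℤ) : ℝ) • G0 (fun j => e1 (v j)) :=
      halt.perm (fun j => e1 (v j)) σ
    rw [hperm, smul_smul]
    congr 1
    have hs : ((Equiv.Perm.sign σ : ℤ) : ℝ) = 1 ∨ ((Equiv.Perm.sign σ : ℤ) : ℝ) = -1 := by
      rcases Int.units_eq_one_or (Equiv.Perm.sign σ) with h | h <;> rw [h] <;> norm_num
    rcases hs with h | h <;> rw [h] <;>
      simp [Nat.factorial, div_eq_mul_inv]
  rw [step1, Finset.sum_const]
  rw [Finset.card_univ, Fintype.card_perm, Fintype.card_fin]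
  rw [← Nat.cast_smul_eq_nsmul ℝ, smul_smul]
  rw [mul_inv_cancel₀ (by exact_mod_cast n.factorial_ne_zero), one_smul]

end TopTerm

/-- Let `(f_r)_r : U → V` and `(g_r)_r : V → W` be skeletons of
supersmooth morphisms between superdomains.  Suppose `f₁(x) : E₁ → F₁` is
invertible for every `x ∈ U_ℝ` and `f₀ : U_ℝ → V_ℝ` is a diffeomorphism.  Define
`g₀ := f₀⁻¹`, `g₁(x') := f₁(g₀(x'))⁻¹`, and for `n > 1` recursively
`gₙ(x')(v') := -Σ_{m,l<n,(α,β)∈I^n_{m,l},σ∈Sₙ} (sgn σ)/(m!l!α!β!)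
  dᵐg_l(x')((f_α × f_β)(g₀(x'))(v^σ))` with `vᵢ := g₁(x')(v'ᵢ)`.
Then `(g_r)_r ∘ (f_r)_r` is the identity skeleton `(id, c_id, 0, 0, …)`, i.e.
`(g_r)_r` is a left inverse of `(f_r)_r`. -/
theorem stmt_18 {E F : Bool → Type}
    [∀ b, AddCommGroup (E b)] [∀ b, Module ℝ (E b)] [∀ b, TopologicalSpace (E b)]
    [∀ b, IsTopologicalAddGroup (E b)] [∀ b, ContinuousSMul ℝ (E b)]
    [∀ b, T2Space (E b)] [∀ b, LocallyConvexSpace ℝ (E b)]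
    [∀ b, AddCommGroup (F b)] [∀ b, Module ℝ (F b)] [∀ b, TopologicalSpace (F b)]
    [∀ b, IsTopologicalAddGroup (F b)] [∀ b, ContinuousSMul ℝ (F b)]
    [∀ b, T2Space (F b)] [∀ b, LocallyConvexSpace ℝ (F b)]
    (U : Set (E false)) (V : Set (F false)) (hU : IsOpen U) (hV : IsOpen V)
    (f : Skel E F) (g : Skel F E)
    -- the skeleton components are alternating multilinear maps:
    (hfalt : ∀ (k : ℕ) (x : E false), x ∈ U → IsMultAlt k (f k x))
    (hgalt : ∀ (k : ℕ) (y : F false), y ∈ V → IsMultAlt k (g k y))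
    -- notation for the lowest components:
    (f0fun : E false → F false) (hf0 : ∀ x, f0fun x = cast (congrArg F Nat.bodd_zero) (f 0 x Fin.elim0))
    (g0fun : F false → E false) (hg0 : ∀ y, g0fun y = cast (congrArg E Nat.bodd_zero) (g 0 y Fin.elim0))
    (f1fun : E false → E true → F true)
    (hf1 : ∀ x w, f1fun x w = cast (congrArg F Nat.bodd_one) (f 1 x (fun _ => w)))
    (g1fun : F false → F true → E true)
    (hg1 : ∀ y w, g1fun y w = cast (congrArg E Nat.bodd_one) (g 1 y (fun _ => w)))
    -- `f₀ : U_ℝ → V_ℝ` is a diffeomorphism with (smooth) inverse `g₀ := f₀⁻¹`: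
    (hf0V : ∀ x ∈ U, f0fun x ∈ V) (hg0U : ∀ y ∈ V, g0fun y ∈ U)
    (hf0smooth : IsSmoothOn (F false) (TVS.ofType (E false)) f0fun U)
    (hg0smooth : IsSmoothOn (E false) (TVS.ofType (F false)) g0fun V)
    (hinv1 : ∀ x ∈ U, g0fun (f0fun x) = x) (hinv2 : ∀ y ∈ V, f0fun (g0fun y) = y)
    -- `f₁(x)` is invertible for every `x ∈ U_ℝ`, with inverse `g₁ := f₁(g₀(·))⁻¹`:
    (hf1bij : ∀ x ∈ U, Function.Bijective (f1fun x))
    (hg1inv : ∀ y ∈ V, ∀ w : F true, f1fun (g0fun y) (g1fun y w) = w)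
    -- the iterated derivatives `dᵐ g_l` of the components of `g`:
    (Dg : (l m : ℕ) → F false → (Fin m → F false) → (Fin l → F true) → E (Nat.bodd l))
    (hDg : ∀ (l m : ℕ) (y : F false) (w : Fin m → F false) (vv : Fin l → F true), y ∈ V →
      IsIterDerivOn V (fun z => g l z vv) m y w (Dg l m y w vv))
    -- the recursive definition of `gₙ` for `n > 1`:
    (hgrec : ∀ (N : ℕ), 2 ≤ N → ∀ y ∈ V, ∀ v' : Fin N → F true,
      g N y v' =
        - bigSum Dg y (fun k vv => f k (g0fun y) vv) N N N (fun j => g1fun y (v' j))) :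
    -- then `(g_r)_r ∘ (f_r)_r` (given by the composition formula, i.e. by `bigSum`
    -- with bounds `m, l ≤ n`) is the identity skeleton `(id, c_id, 0, 0, …)`:
    ∀ x ∈ U,
      (g0fun (f0fun x) = x) ∧
      (∀ v : Fin 1 → E true,
        cast (congrArg E Nat.bodd_one)
          (bigSum Dg (f0fun x) (fun k vv => f k x vv) 1 2 2 v) = v 0) ∧
      (∀ (N : ℕ), 2 ≤ N → ∀ v : Fin N → E true,
        bigSum Dg (f0fun x) (fun k vv => f k x vv) N (N + 1) (N + 1) v = 0) := by
  intro x hx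
  have hy0 : f0fun x ∈ V := hf0V x hx
  have key : ∀ w : E true, g1fun (f0fun x) (f1fun x w) = w := by
    intro w
    have h := hg1inv (f0fun x) hy0 (f1fun x w)
    rw [hinv1 x hx] at h
    exact (hf1bij x hx).1 h
  have hD0 : ∀ (n : ℕ) (w : Fin 0 → F false) (vv : Fin n → F true),
      Dg n 0 (f0fun x) w vv = g n (f0fun x) vv := by
    intro n w vv
    exact hDg n 0 (f0fun x) w vv hy0
  have he1 : ∀ w : E true, f1fun x w =
      cast (congrArg F Nat.bodd_one) ((fun k vv => f k x vv) 1 (fun _ => w)) :=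
    fun w => hf1 x w
  refine ⟨hinv1 x hx, ?_, ?_⟩
  · -- the n = 1 component
    intro v
    rw [bigSum_eq_bigTerm]
    simp only [Finset.sum_range_succ, Finset.sum_range_zero]
    rw [show bigTerm Dg (f0fun x) (fun k vv => f k x vv) 1 v 0 0 = 0 from bigTerm_parity (by simp),
      show bigTerm Dg (f0fun x) (fun k vv => f k x vv) 1 v 1 0 = 0 from bigTerm_parity (by simp),
      show bigTerm Dg (f0fun x) (fun k vv => f k x vv) 1 v 1 1 = 0 from bigTerm_zero (by omega)]
    rw [bigTerm_top Dg (f0fun x) (fun k vv => f k x vv) 1 le_rfl v (g 1 (f0fun x))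
      (hD0 1) (hgalt 1 (f0fun x) hy0) (f1fun x) he1]
    have h1 : (fun j : Fin 1 => f1fun x (v j)) = (fun _ : Fin 1 => f1fun x (v 0)) :=
      funext fun j => by rw [Subsingleton.elim j 0]
    simp only [zero_add, add_zero]
    rw [h1, ← hg1]
    exact key (v 0)
  · -- the n ≥ 2 components
    intro N hN v
    rw [bigSum_eq_bigTerm]
    rw [Finset.sum_range_succ]
    have hlast : ∑ l ∈ Finset.range (N + 1), bigTerm Dg (f0fun x) (fun k vv => f k x vv) N v N l
        = 0 :=
      Finset.sum_eq_zero fun l _ => bigTerm_zero (by omega)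
    rw [hlast, add_zero]
    have hsplit : ∀ m ∈ Finset.range N,
        (∑ l ∈ Finset.range (N + 1), bigTerm Dg (f0fun x) (fun k vv => f k x vv) N v m l) =
        (∑ l ∈ Finset.range N, bigTerm Dg (f0fun x) (fun k vv => f k x vv) N v m l) +
          bigTerm Dg (f0fun x) (fun k vv => f k x vv) N v m N :=
      fun m _ => Finset.sum_range_succ _ N
    rw [Finset.sum_congr rfl hsplit, Finset.sum_add_distrib]
    have hsingle : ∑ m ∈ Finset.range N, bigTerm Dg (f0fun x) (fun k vv => f k x vv) N v m N
        = bigTerm Dg (f0fun x) (fun k vv => f k x vv) N v 0 N := by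
      refine Finset.sum_eq_single_of_mem 0 (Finset.mem_range.mpr (by omega)) ?_
      intro m _ hm
      exact bigTerm_zero (by have := Nat.pos_of_ne_zero hm; omega)
    rw [hsingle]
    rw [bigTerm_top Dg (f0fun x) (fun k vv => f k x vv) N (by omega) v (g N (f0fun x))
      (hD0 N) (hgalt N (f0fun x) hy0) (f1fun x) he1]
    rw [hgrec N hN (f0fun x) hy0 (fun j => f1fun x (v j))]
    have e2 : g0fun (f0fun x) = x := hinv1 x hx
    rw [e2]
    have e3 : (fun j => g1fun (f0fun x) (f1fun x (v j))) = v := funext fun j => key (v j)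
    rw [e3]
    rw [← bigSum_eq_bigTerm]
    exact add_neg_cancel _
end
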